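/- arXiv:1805.00602 — 7 statements merged into one kernel-verified Lean document; each statement's English description precedes it below -/
import Mathlib

section
/- Let C ∈ M_n(ℂ), let F be a convex subset of M_n(ℂ) containing a scalar matrix μI. Then W_C(F) is star-shaped with star-center μ·tr(C). -/
open Matrix

/-- The C-numerical range of a matrix A: `{tr(C U* A U) : U unitary}`. -/
def cNumRange {n : ℕ} (C A : Matrix (Fin n) (Fin n) ℂ) : Set ℂ :=
  {z | ∃ U : Matrix (Fin n) (Fin n) ℂ, U ∈ Matrix.unitaryGroup (Fin n) ℂ ∧
    z = (C * Uᴴ * A * U).trace}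

/-- The C-numerical range of a set of matrices: union of the C-numerical ranges. -/
def cNumRangeSet {n : ℕ} (C : Matrix (Fin n) (Fin n) ℂ)
    (F : Set (Matrix (Fin n) (Fin n) ℂ)) : Set ℂ :=
  ⋃ A ∈ F, cNumRange C A

/-- `c` is a star-center of `S` if every segment from `c` to a point of `S` lies in `S`. -/
def IsStarCenter (c : ℂ) (S : Set ℂ) : Prop := ∀ z ∈ S, segment ℝ c z ⊆ S

theorem stmt_6 {n : ℕ} (C : Matrix (Fin n) (Fin n) ℂ)
    (F : Set (Matrix (Fin n) (Fin n) ℂ)) (hF : Convex ℝ F) (μ : ℂ)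
    (hμ : μ • (1 : Matrix (Fin n) (Fin n) ℂ) ∈ F) :
    IsStarCenter (μ * C.trace) (cNumRangeSet C F) := by
  intro z hz w hw
  simp only [cNumRangeSet, Set.mem_iUnion] at hz ⊢
  obtain ⟨A, hA, U, hU, hzU⟩ := hz
  obtain ⟨a, b, ha, hb, hab, hw⟩ := hw
  refine ⟨a • (μ • (1 : Matrix (Fin n) (Fin n) ℂ)) + b • A,
    hF hμ hA ha hb hab, U, hU, ?_⟩
  have hUU : Uᴴ * U = 1 := by
    have := hU.1
    simpa [Matrix.star_eq_conjTranspose] using this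
  have hμtr : (C * Uᴴ * (μ • (1 : Matrix (Fin n) (Fin n) ℂ)) * U).trace
      = μ * C.trace := by
    have : C * Uᴴ * (μ • (1 : Matrix (Fin n) (Fin n) ℂ)) * U
        = μ • (C * (Uᴴ * U)) := by
      simp [Matrix.mul_smul, Matrix.smul_mul, Matrix.mul_assoc]
    rw [this, hUU]
    simp [Matrix.trace_smul]
  subst hzU
  rw [← hw]
  have expand : C * Uᴴ * (a • (μ • (1 : Matrix (Fin n) (Fin n) ℂ)) + b • A) * U
      = a • (C * Uᴴ * (μ • (1 : Matrix (Fin n) (Fin n) ℂ)) * U)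
        + b • (C * Uᴴ * A * U) := by
    simp [Matrix.mul_add, Matrix.add_mul, Matrix.mul_smul, Matrix.smul_mul]
  rw [expand, Matrix.trace_add, Matrix.trace_smul, Matrix.trace_smul, hμtr]
end

section
/- Let C, A, B ∈ M_n(ℂ) and F = conv{A, B}. If μ is a common star-center of W_C(A) and W_C(B), then W_C(F) is star-shaped with star-center μ; moreover, for any unitary V, the filled triangle conv{μ, tr(CV*AV), tr(CV*BV)} is contained in W_C(F). -/
open Matrix Set

noncomputable section StarAux

/-- planar cross product of two complex numbers viewed as vectors in ℝ². -/
def cxross (x y : ℂ) : ℝ := x.re * y.im - x.im * y.re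

lemma cxross_cont : Continuous fun p : ℂ × ℂ => cxross p.1 p.2 := by
  unfold cxross
  fun_prop

lemma cramer_id (x y q : ℂ) :
    cxross x y • q = cxross q y • x + cxross x q • y := by
  apply Complex.ext <;>
    simp [cxross, Complex.real_smul, Complex.add_re, Complex.add_im,
      Complex.mul_re, Complex.mul_im] <;> ring

lemma cxross_comb_left (x y : ℂ) (c₁ c₂ : ℝ) :
    cxross (c₁ • x + c₂ • y) y = c₁ * cxross x y := by
  simp [cxross, Complex.real_smul, Complex.add_re, Complex.add_im,
    Complex.mul_re, Complex.mul_im]; ring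

lemma cxross_comb_right (x y : ℂ) (c₁ c₂ : ℝ) :
    cxross x (c₁ • x + c₂ • y) = c₂ * cxross x y := by
  simp [cxross, Complex.real_smul, Complex.add_re, Complex.add_im,
    Complex.mul_re, Complex.mul_im]; ring

/-- membership in a segment from 0 -/
lemma smul_mem_segment_zero {c : ℝ} (y : ℂ) (h0 : 0 ≤ c) (h1 : c ≤ 1) :
    c • y ∈ segment ℝ (0 : ℂ) y :=
  ⟨1 - c, c, by linarith, h0, by ring, by simp⟩

/-- degenerate (collinear) case -/
lemma collinear_case (x y q : ℂ) (hd : cxross x y = 0) (c₁ c₂ : ℝ) (h1 : 0 ≤ c₁)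
    (h2 : 0 ≤ c₂) (h3 : c₁ + c₂ ≤ 1) (hq : q = c₁ • x + c₂ • y) :
    q ∈ segment ℝ (0 : ℂ) x ∪ segment ℝ (0 : ℂ) y ∪ segment ℝ x y := by
  have hd' : x.re * y.im - x.im * y.re = 0 := hd
  by_cases hx : x = 0
  · subst hx
    left; right
    rw [hq]
    simpa using smul_mem_segment_zero y h2 (by linarith)
  · -- y = λ • x
    have hn : 0 < x.re ^ 2 + x.im ^ 2 := by
      have : x.re ≠ 0 ∨ x.im ≠ 0 := by
        by_contra hc
        push_neg at hc
        exact hx (Complex.ext hc.1 hc.2)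
      rcases this with h | h <;> positivity
    set lam : ℝ := (x.re * y.re + x.im * y.im) / (x.re ^ 2 + x.im ^ 2) with hlam
    have hre : (x.re ^ 2 + x.im ^ 2) * y.re = (x.re * y.re + x.im * y.im) * x.re := by
      linear_combination (-x.im) * hd'
    have him : (x.re ^ 2 + x.im ^ 2) * y.im = (x.re * y.re + x.im * y.im) * x.im := by
      linear_combination x.re * hd'
    have hy : y = lam • x := by
      apply Complex.ext
      · rw [Complex.smul_re, hlam, smul_eq_mul]
        field_simp
        linear_combination hre
      · rw [Complex.smul_im, hlam, smul_eq_mul]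
        field_simp
        linear_combination him
    have hqx : q = (c₁ + c₂ * lam) • x := by
      rw [hq, hy, smul_smul, ← add_smul]
    set τ : ℝ := c₁ + c₂ * lam with htau
    rcases le_or_gt τ 1 with hτ1 | hτ1
    · rcases le_or_gt 0 τ with hτ0 | hτ0
      · left; left; rw [hqx]; exact smul_mem_segment_zero x hτ0 hτ1
      · -- τ < 0 : lam < 0, c₂ > 0 ; q ∈ segment 0 y
        have hlamneg : c₂ * lam < 0 := by nlinarith
        have hc2pos : 0 < c₂ := by
          rcases lt_or_eq_of_le h2 with h | h
          · exact h
          · exfalso; rw [← h] at hlamneg; simp at hlamneg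
        have hlneg : lam < 0 := by nlinarith
        have hlne : lam ≠ 0 := ne_of_lt hlneg
        left; right
        have ht : q = (τ / lam) • y := by
          rw [hy, smul_smul, hqx]
          congr 1
          field_simp
        rw [ht]
        apply smul_mem_segment_zero
        · exact le_of_lt (div_pos_iff.mpr (Or.inr ⟨hτ0, hlneg⟩))
        · rw [div_le_one_iff]
          right; right
          constructor
          · exact hlneg
          · nlinarith
    · -- τ > 1 : lam > 1, c₂ > 0 ; q ∈ segment x y
      have h5 : c₂ * (lam - 1) > 0 := by nlinarith
      have hc2pos : 0 < c₂ := by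
        rcases eq_or_lt_of_le h2 with h | h
        · exfalso; rw [← h] at h5; simp at h5
        · exact h
      have hlgt : 1 < lam := by nlinarith
      right
      set t : ℝ := (τ - 1) / (lam - 1) with hht
      have hlne1 : lam - 1 ≠ 0 := by intro h; rw [h] at h5; simp at h5
      have ht0 : 0 ≤ t := div_nonneg (by linarith) (by linarith)
      have hτlam : τ ≤ lam := by nlinarith
      have ht1 : t ≤ 1 := by
        rw [hht, div_le_one (by linarith)]; linarith
      refine ⟨1 - t, t, by linarith, ht0, by ring, ?_⟩
      rw [hy, smul_smul, ← add_smul, hqx]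
      congr 1
      rw [hht]
      field_simp
      ring
section KeyLemma

open Set

/-- The compact coefficient set. -/
def Kcoef : Set (ℝ × ℝ) := {c | 0 ≤ c.1 ∧ 0 ≤ c.2 ∧ c.1 + c.2 ≤ 1}

lemma Kcoef_compact : IsCompact Kcoef := by
  have hsub : Kcoef ⊆ Icc ((0 : ℝ), (0 : ℝ)) (1, 1) := by
    rintro ⟨a, b⟩ ⟨h1, h2, h3⟩
    dsimp only at h1 h2 h3
    simp only [Set.mem_Icc, Prod.le_def]
    exact ⟨⟨h1, h2⟩, ⟨by linarith, by linarith⟩⟩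
  have hclosed : IsClosed Kcoef := by
    apply IsClosed.inter (isClosed_le continuous_const continuous_fst)
    exact IsClosed.inter (isClosed_le continuous_const continuous_snd)
      (isClosed_le (continuous_fst.add continuous_snd) continuous_const)
  exact (isCompact_Icc).of_isClosed_subset hclosed hsub

lemma Tset_closed (q : ℂ) :
    IsClosed {p : ℂ × ℂ | ∃ c ∈ Kcoef, q = c.1 • p.1 + c.2 • p.2} := by
  apply IsSeqClosed.isClosed
  intro x p hx hlim
  choose c hcK hcq using hx
  obtain ⟨d, hdK, φ, hφ, hdlim⟩ := Kcoef_compact.tendsto_subseq hcK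
  refine ⟨d, hdK, ?_⟩
  have h1 : Filter.Tendsto (fun k => (c (φ k)).1 • (x (φ k)).1 + (c (φ k)).2 • (x (φ k)).2)
      Filter.atTop (nhds (d.1 • p.1 + d.2 • p.2)) := by
    have hx1 : Filter.Tendsto (fun k => (x (φ k)).1) Filter.atTop (nhds p.1) :=
      ((continuous_fst.tendsto p).comp (hlim.comp hφ.tendsto_atTop))
    have hx2 : Filter.Tendsto (fun k => (x (φ k)).2) Filter.atTop (nhds p.2) :=
      ((continuous_snd.tendsto p).comp (hlim.comp hφ.tendsto_atTop))
    have hc1 : Filter.Tendsto (fun k => (c (φ k)).1) Filter.atTop (nhds d.1) :=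
      (continuous_fst.tendsto d).comp hdlim
    have hc2 : Filter.Tendsto (fun k => (c (φ k)).2) Filter.atTop (nhds d.2) :=
      (continuous_snd.tendsto d).comp hdlim
    exact (hc1.smul hx1).add (hc2.smul hx2)
  have h2 : Filter.Tendsto (fun _ : ℕ => q) Filter.atTop (nhds q) := tendsto_const_nhds
  have : (fun k => (c (φ k)).1 • (x (φ k)).1 + (c (φ k)).2 • (x (φ k)).2) = fun _ => q := by
    funext k; exact (hcq (φ k)).symm
  rw [this] at h1
  exact tendsto_nhds_unique h2 h1

/-- The key abstract lemma: if `D ⊆ ℂ²` is preconnected, contains `(a,b)`, and one can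
"shrink" either coordinate towards `0` staying in `D`, then any point of `conv{0,a,b}`
lies on a segment `[x,y]` with `(x,y) ∈ D`. -/
lemma key_lemma (D : Set (ℂ × ℂ)) (hD : IsPreconnected D)
    (h1 : ∀ p ∈ D, ∀ s : ℝ, 0 ≤ s → s ≤ 1 → ∃ y, (s • p.1, y) ∈ D)
    (h2 : ∀ p ∈ D, ∀ s : ℝ, 0 ≤ s → s ≤ 1 → ∃ x, (x, s • p.2) ∈ D)
    (q a b : ℂ) (hab : (a, b) ∈ D)
    (c₁ c₂ : ℝ) (hc₁ : 0 ≤ c₁) (hc₂ : 0 ≤ c₂) (hc : c₁ + c₂ ≤ 1)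
    (hq : q = c₁ • a + c₂ • b) :
    ∃ p ∈ D, q ∈ segment ℝ p.1 p.2 := by
  by_contra hcon
  push_neg at hcon
  -- No segment from 0 to a first coordinate passes through q:
  have h0x : ∀ p ∈ D, q ∉ segment ℝ (0 : ℂ) p.1 := by
    rintro p hp ⟨u, v, hu, hv, huv, heq⟩
    obtain ⟨y, hy⟩ := h1 p hp v hv (by linarith)
    have hqv : v • p.1 = q := by rw [← heq]; simp
    rw [hqv] at hy
    exact hcon _ hy (left_mem_segment ℝ q y)
  have h0y : ∀ p ∈ D, q ∉ segment ℝ (0 : ℂ) p.2 := by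
    rintro p hp ⟨u, v, hu, hv, huv, heq⟩
    obtain ⟨x, hx⟩ := h2 p hp v hv (by linarith)
    have hqv : v • p.2 = q := by rw [← heq]; simp
    rw [hqv] at hx
    exact hcon _ hx (right_mem_segment ℝ x q)
  have hseg : ∀ p ∈ D, q ∉ segment ℝ p.1 p.2 := hcon
  -- the two closed sets
  set T : Set (ℂ × ℂ) := {p | ∃ c ∈ Kcoef, q = c.1 • p.1 + c.2 • p.2} with hT
  set u : Set (ℂ × ℂ) := {p | 0 < cxross q p.2 * cxross p.1 p.2 ∧
      0 < cxross p.1 q * cxross p.1 p.2 ∧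
      (cxross q p.2 + cxross p.1 q) * cxross p.1 p.2 < cxross p.1 p.2 * cxross p.1 p.2}
      with hu
  have huopen : IsOpen u := by
    apply IsOpen.inter
    · exact isOpen_lt continuous_const
        (((cxross_cont.comp (continuous_const.prodMk continuous_snd)).mul cxross_cont))
    apply IsOpen.inter
    · exact isOpen_lt continuous_const
        (((cxross_cont.comp (continuous_fst.prodMk continuous_const)).mul cxross_cont))
    · exact isOpen_lt
        ((((cxross_cont.comp (continuous_const.prodMk continuous_snd)).add
          (cxross_cont.comp (continuous_fst.prodMk continuous_const)))).mul cxross_cont)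
        (cxross_cont.mul cxross_cont)
  -- u ⊆ T
  have huT : u ⊆ T := by
    rintro ⟨x, y⟩ ⟨hu1, hu2, hu3⟩
    simp only at hu1 hu2 hu3
    have hdne : cxross x y ≠ 0 := by
      intro h; rw [h] at hu1; simp at hu1
    have hdd : 0 < cxross x y * cxross x y := mul_self_pos.mpr hdne
    refine ⟨(cxross q y / cxross x y, cxross x q / cxross x y), ⟨?_, ?_, ?_⟩, ?_⟩
    · have : cxross q y / cxross x y = cxross q y * cxross x y / (cxross x y * cxross x y) := by
        rw [mul_div_mul_right _ _ hdne]
      rw [this]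
      exact le_of_lt (div_pos hu1 hdd)
    · have : cxross x q / cxross x y = cxross x q * cxross x y / (cxross x y * cxross x y) := by
        rw [mul_div_mul_right _ _ hdne]
      rw [this]
      exact le_of_lt (div_pos hu2 hdd)
    · have heq : cxross q y / cxross x y + cxross x q / cxross x y
          = (cxross q y + cxross x q) * cxross x y / (cxross x y * cxross x y) := by
        rw [← add_div, ← mul_div_mul_right _ _ hdne]
      rw [heq]
      exact le_of_lt ((div_lt_one hdd).mpr hu3)
    · show q = (cxross q y / cxross x y) • x + (cxross x q / cxross x y) • y
      have e1 : cxross x y * (cxross q y / cxross x y) = cxross q y := by field_simp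
      have e2 : cxross x y * (cxross x q / cxross x y) = cxross x q := by field_simp
      have hgoal : cxross x y • ((cxross q y / cxross x y) • x
          + (cxross x q / cxross x y) • y) = cxross x y • q := by
        rw [smul_add, smul_smul, smul_smul, e1, e2]
        exact (cramer_id x y q).symm
      exact (smul_right_injective ℂ hdne hgoal).symm
  -- apply preconnectedness with closed sets T and uᶜ
  obtain ⟨y₀, hy₀⟩ := h1 (a, b) hab 0 le_rfl zero_le_one
  rw [zero_smul] at hy₀
  have hcover : D ⊆ T ∪ uᶜ := by
    intro p _
    by_cases h : p ∈ u
    · exact Or.inl (huT h)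
    · exact Or.inr h
  have hne1 : (D ∩ T).Nonempty := ⟨(a, b), hab, ⟨(c₁, c₂), ⟨hc₁, hc₂, hc⟩, hq⟩⟩
  have hne2 : (D ∩ uᶜ).Nonempty := by
    refine ⟨(0, y₀), hy₀, ?_⟩
    intro hmem
    rw [hu] at hmem
    have : cxross (0 : ℂ) y₀ = 0 := by simp [cxross]
    rw [Set.mem_setOf_eq] at hmem
    rw [this] at hmem
    simp at hmem
  obtain ⟨p, hpD, hpT, hpu⟩ :=
    isPreconnected_closed_iff.mp hD T uᶜ (Tset_closed q) huopen.isClosed_compl hcover hne1 hne2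
  -- analyze p
  obtain ⟨x, y⟩ := p
  obtain ⟨⟨d₁, d₂⟩, ⟨hd₁, hd₂, hd12⟩, hqd⟩ := hpT
  dsimp only at hqd hpu ⊢
  dsimp only [Kcoef] at hd₁ hd₂ hd12
  by_cases hdeg : cxross x y = 0
  · -- collinear case
    rcases collinear_case x y q hdeg d₁ d₂ hd₁ hd₂ hd12 hqd with (h | h) | h
    · exact h0x _ hpD h
    · exact h0y _ hpD h
    · exact hseg _ hpD h
  · have hdd : 0 < cxross x y * cxross x y := mul_self_pos.mpr hdeg
    have hcq1 : cxross q y = d₁ * cxross x y := by rw [hqd]; exact cxross_comb_left x y d₁ d₂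
    have hcq2 : cxross x q = d₂ * cxross x y := by rw [hqd]; exact cxross_comb_right x y d₁ d₂
    -- not all strict
    have : ¬(0 < d₁ ∧ 0 < d₂ ∧ d₁ + d₂ < 1) := by
      rintro ⟨g1, g2, g3⟩
      apply hpu
      rw [hu, Set.mem_setOf_eq]
      refine ⟨?_, ?_, ?_⟩
      · rw [hcq1, mul_assoc]; exact mul_pos g1 hdd
      · rw [hcq2, mul_assoc]; exact mul_pos g2 hdd
      · rw [hcq1, hcq2, ← add_mul, mul_assoc]
        calc (d₁ + d₂) * (cxross x y * cxross x y) < 1 * (cxross x y * cxross x y) := by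
              exact mul_lt_mul_of_pos_right g3 hdd
          _ = cxross x y * cxross x y := one_mul _
    rcases eq_or_lt_of_le hd₁ with h | h
    · -- d₁ = 0 : q = d₂ • y
      apply h0y _ hpD
      have : q = d₂ • y := by rw [hqd, ← h]; simp
      rw [this]
      exact smul_mem_segment_zero y hd₂ (by linarith)
    rcases eq_or_lt_of_le hd₂ with h2' | h2'
    · apply h0x _ hpD
      have : q = d₁ • x := by rw [hqd, ← h2']; simp
      rw [this]
      exact smul_mem_segment_zero x hd₁ (by linarith)
    rcases eq_or_lt_of_le hd12 with h3' | h3'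
    · apply hseg _ hpD
      exact ⟨d₁, d₂, hd₁, hd₂, h3', hqd.symm⟩
    · exact this ⟨h, h2', h3'⟩

end KeyLemma
section UnitaryConn

open Matrix Set Complex

variable {n : ℕ}

local notation "M𝕄" => Matrix (Fin n) (Fin n) ℂ

/-- 1 + it•H is invertible for H hermitian and t real -/
lemma det_one_add_smul_I_hermitian (H : Matrix (Fin n) (Fin n) ℂ) (hH : Hᴴ = H) (t : ℝ) :
    ((1 : Matrix (Fin n) (Fin n) ℂ) + ((t : ℂ) * Complex.I) • H).det ≠ 0 := by
  intro h0
  obtain ⟨v, hv0, hveq⟩ := Matrix.exists_mulVec_eq_zero_iff.mpr h0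
  set c : ℂ := (t : ℂ) * Complex.I with hc
  rw [Matrix.add_mulVec, Matrix.one_mulVec, Matrix.smul_mulVec] at hveq
  have hvneg : v = -(c • H.mulVec v) := by
    rw [eq_neg_iff_add_eq_zero]; exact hveq
  set r : ℂ := dotProduct (star v) (H.mulVec v) with hr
  have hrreal : starRingEnd ℂ r = r := by
    have h1 : star r = star (H.mulVec v) ⬝ᵥ v := by
      rw [hr, star_dotProduct, star_star]
    have h2 : star (H.mulVec v) ⬝ᵥ v = (star v ᵥ* Hᴴ) ⬝ᵥ v := by rw [Matrix.star_mulVec]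
    have h3 : (star v ᵥ* Hᴴ) ⬝ᵥ v = star v ⬝ᵥ (Hᴴ.mulVec v) := by
      rw [Matrix.dotProduct_mulVec]
    calc starRingEnd ℂ r = star r := rfl
      _ = star v ⬝ᵥ Hᴴ.mulVec v := by rw [h1, h2, h3]
      _ = r := by rw [hH]
  have hrim : r.im = 0 := by
    have := congrArg Complex.im hrreal
    simp [Complex.conj_im] at this
    linarith [this]
  set s : ℂ := dotProduct (star v) v with hs
  have hsval : s = -(c * r) := by
    have h := congrArg (fun w => dotProduct (star v) w) hvneg
    rw [dotProduct_neg, dotProduct_smul, smul_eq_mul] at h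
    rw [hs, h, hr]
  have hsre : 0 < s.re := by
    rw [hs]
    have hdp : dotProduct (star v) v = ∑ i, star (v i) * v i := by
      simp [dotProduct]
    rw [hdp, Complex.re_sum]
    apply Finset.sum_pos'
    · intro i _
      have : star (v i) * v i = ((Complex.normSq (v i) : ℝ) : ℂ) := by
        rw [mul_comm, Complex.star_def, Complex.mul_conj]
      rw [this, Complex.ofReal_re]
      exact Complex.normSq_nonneg _
    · obtain ⟨i, hi⟩ := Function.ne_iff.mp hv0
      refine ⟨i, Finset.mem_univ i, ?_⟩
      have : star (v i) * v i = ((Complex.normSq (v i) : ℝ) : ℂ) := by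
        rw [mul_comm, Complex.star_def, Complex.mul_conj]
      rw [this, Complex.ofReal_re]
      exact Complex.normSq_pos.mpr hi
  have : s.re = 0 := by
    rw [hsval, hc]
    simp [Complex.mul_re, Complex.mul_im, hrim]
  linarith

/-- the Cayley path: every unitary V with det (V+1) ≠ 0 lies in a preconnected subset
of the unitary group containing 1. -/
lemma cayley_path (V : Matrix (Fin n) (Fin n) ℂ) (hV : V ∈ Matrix.unitaryGroup (Fin n) ℂ)
    (hdet : (V + 1).det ≠ 0) :
    ∃ S : Set (Matrix (Fin n) (Fin n) ℂ), IsPreconnected S ∧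
      S ⊆ (Matrix.unitaryGroup (Fin n) ℂ : Set (Matrix (Fin n) (Fin n) ℂ)) ∧
      (1 : Matrix (Fin n) (Fin n) ℂ) ∈ S ∧ V ∈ S := by
  have hVs : star V * V = 1 := Matrix.mem_unitaryGroup_iff'.mp hV
  have hdet1 : IsUnit (V + 1).det := isUnit_iff_ne_zero.mpr hdet
  have hdetS : IsUnit (star V + 1).det := by
    have h1 : star V + 1 = (V + 1)ᴴ := by
      rw [Matrix.conjTranspose_add, Matrix.conjTranspose_one, Matrix.star_eq_conjTranspose]
    rw [h1, Matrix.det_conjTranspose]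
    exact isUnit_iff_ne_zero.mpr (by simpa using star_ne_zero.mpr hdet)
  set H : Matrix (Fin n) (Fin n) ℂ := (-Complex.I) • ((V - 1) * (V + 1)⁻¹) with hHdef
  have E1 : (star V - 1) * (V + 1) = (star V + 1) * (1 - V) := by
    have expand : (star V - 1) * (V + 1) - (star V + 1) * (1 - V)
        = (star V * V) + (star V * V) - (1 + 1) := by noncomm_ring
    have : (star V - 1) * (V + 1) - (star V + 1) * (1 - V) = 0 := by
      rw [expand, hVs]; abel
    exact sub_eq_zero.mp this
  have hkey : (star V + 1)⁻¹ * (star V - 1) = (1 - V) * (V + 1)⁻¹ := by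
    calc (star V + 1)⁻¹ * (star V - 1)
        = (star V + 1)⁻¹ * ((star V - 1) * ((V + 1) * (V + 1)⁻¹)) := by
          rw [Matrix.mul_nonsing_inv _ hdet1, mul_one]
      _ = (star V + 1)⁻¹ * (((star V - 1) * (V + 1)) * (V + 1)⁻¹) := by
          rw [Matrix.mul_assoc]
      _ = ((star V + 1)⁻¹ * (star V + 1)) * ((1 - V) * (V + 1)⁻¹) := by
          rw [E1]; simp only [Matrix.mul_assoc]
      _ = (1 - V) * (V + 1)⁻¹ := by rw [Matrix.nonsing_inv_mul _ hdetS, one_mul]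
  have hH : Hᴴ = H := by
    rw [hHdef, Matrix.conjTranspose_smul, Matrix.conjTranspose_mul,
      Matrix.conjTranspose_nonsing_inv, Matrix.conjTranspose_add,
      Matrix.conjTranspose_sub, Matrix.conjTranspose_one]
    rw [show star (-Complex.I) = Complex.I by simp]
    rw [show Vᴴ = star V from rfl, hkey]
    rw [show (1 - V) * (V + 1)⁻¹ = -((V - 1) * (V + 1)⁻¹) by rw [← neg_sub V 1, neg_mul]]
    rw [smul_neg, ← neg_smul]
  -- the path
  set N : ℝ → Matrix (Fin n) (Fin n) ℂ := fun t => 1 + ((t : ℂ) * Complex.I) • H with hN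
  set Nb : ℝ → Matrix (Fin n) (Fin n) ℂ := fun t => 1 - ((t : ℂ) * Complex.I) • H with hNb
  have hdetN : ∀ t : ℝ, (N t).det ≠ 0 := fun t => det_one_add_smul_I_hermitian H hH t
  have hdetNb : ∀ t : ℝ, (Nb t).det ≠ 0 := by
    intro t
    have : Nb t = 1 + (((-t : ℝ) : ℂ) * Complex.I) • H := by
      rw [hNb]; push_cast; rw [neg_mul, neg_smul, sub_eq_add_neg]
    rw [this]
    exact det_one_add_smul_I_hermitian H hH (-t)
  have hNbconj : ∀ t : ℝ, (N t)ᴴ = Nb t := by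
    intro t
    rw [hN, hNb]
    simp only [Matrix.conjTranspose_add, Matrix.conjTranspose_one, Matrix.conjTranspose_smul, hH]
    rw [show star ((t : ℂ) * Complex.I) = -((t : ℂ) * Complex.I) by simp]
    rw [neg_smul, sub_eq_add_neg]
  have hNconj : ∀ t : ℝ, (Nb t)ᴴ = N t := by
    intro t
    rw [hN, hNb]
    simp only [Matrix.conjTranspose_sub, Matrix.conjTranspose_one, Matrix.conjTranspose_smul, hH]
    rw [show star ((t : ℂ) * Complex.I) = -((t : ℂ) * Complex.I) by simp]
    rw [neg_smul, sub_neg_eq_add]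
  have hcomm : ∀ t : ℝ, N t * Nb t = Nb t * N t := by
    intro t; rw [hN, hNb]; dsimp only
    simp only [mul_sub, sub_mul, mul_add, add_mul, mul_one, one_mul]
    abel
  set γ : ℝ → Matrix (Fin n) (Fin n) ℂ := fun t => N t * (Nb t)⁻¹ with hγ
  have hmem : ∀ t : ℝ, γ t ∈ Matrix.unitaryGroup (Fin n) ℂ := by
    intro t
    rw [Matrix.mem_unitaryGroup_iff]
    have hstar : star (γ t) = (N t)⁻¹ * Nb t := by
      rw [hγ, Matrix.star_eq_conjTranspose, Matrix.conjTranspose_mul,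
        Matrix.conjTranspose_nonsing_inv, hNconj, hNbconj]
    rw [hstar, hγ]
    calc N t * (Nb t)⁻¹ * ((N t)⁻¹ * Nb t)
        = N t * ((Nb t)⁻¹ * (N t)⁻¹) * Nb t := by
          rw [Matrix.mul_assoc, Matrix.mul_assoc, Matrix.mul_assoc]
      _ = N t * (N t * Nb t)⁻¹ * Nb t := by rw [Matrix.mul_inv_rev]
      _ = N t * (Nb t * N t)⁻¹ * Nb t := by rw [hcomm]
      _ = N t * ((N t)⁻¹ * (Nb t)⁻¹) * Nb t := by rw [Matrix.mul_inv_rev]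
      _ = (N t * (N t)⁻¹) * ((Nb t)⁻¹ * Nb t) := by
          rw [Matrix.mul_assoc, Matrix.mul_assoc, Matrix.mul_assoc]
      _ = 1 := by
          rw [Matrix.mul_nonsing_inv _ (isUnit_iff_ne_zero.mpr (hdetN t)),
            Matrix.nonsing_inv_mul _ (isUnit_iff_ne_zero.mpr (hdetNb t)), one_mul]
  have hγ0 : γ 0 = 1 := by
    show N 0 * (Nb 0)⁻¹ = 1
    have h1 : N 0 = 1 := by rw [hN]; norm_num
    have h2 : Nb 0 = 1 := by rw [hNb]; norm_num
    rw [h1, h2, inv_one, one_mul]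
  have hγ1 : γ 1 = V := by
    have hIH : Complex.I • H = (V - 1) * (V + 1)⁻¹ := by
      rw [hHdef, smul_smul]
      rw [show Complex.I * -Complex.I = 1 by simp [Complex.I_mul_I]]
      rw [one_smul]
    have hN1 : N 1 = 1 + (V - 1) * (V + 1)⁻¹ := by
      rw [hN]; push_cast; rw [one_mul, hIH]
    have hNb1 : Nb 1 = 1 - (V - 1) * (V + 1)⁻¹ := by
      rw [hNb]; push_cast; rw [one_mul, hIH]
    have hcancel : (V + 1)⁻¹ * (V + 1) = 1 := Matrix.nonsing_inv_mul _ hdet1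
    have hmul1 : N 1 * (V + 1) = V + V := by
      rw [hN1, Matrix.add_mul, Matrix.one_mul, Matrix.mul_assoc, hcancel, mul_one]
      abel
    have hmul2 : (V * Nb 1) * (V + 1) = V + V := by
      rw [hNb1, Matrix.mul_assoc, Matrix.sub_mul, Matrix.one_mul, Matrix.mul_assoc, hcancel,
        mul_one]
      rw [show V + 1 - (V - 1) = 1 + 1 by abel]
      rw [Matrix.mul_add, mul_one]
    have heq : N 1 = V * Nb 1 := by
      have h := hmul1.trans hmul2.symm
      calc N 1 = N 1 * ((V + 1) * (V + 1)⁻¹) := by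
            rw [Matrix.mul_nonsing_inv _ hdet1, mul_one]
        _ = (N 1 * (V + 1)) * (V + 1)⁻¹ := by rw [Matrix.mul_assoc]
        _ = ((V * Nb 1) * (V + 1)) * (V + 1)⁻¹ := by rw [h]
        _ = (V * Nb 1) * ((V + 1) * (V + 1)⁻¹) := by rw [Matrix.mul_assoc]
        _ = V * Nb 1 := by rw [Matrix.mul_nonsing_inv _ hdet1, mul_one]
    show N 1 * (Nb 1)⁻¹ = V
    rw [heq, Matrix.mul_assoc, Matrix.mul_nonsing_inv _ (isUnit_iff_ne_zero.mpr (hdetNb 1)),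
      mul_one]
  have hcont : Continuous γ := by
    have hNcont : Continuous N := by
      apply continuous_const.add
      exact (Complex.continuous_ofReal.mul continuous_const).smul continuous_const
    have hNbcont : Continuous Nb := by
      apply continuous_const.sub
      exact (Complex.continuous_ofReal.mul continuous_const).smul continuous_const
    have hNbinv : Continuous fun t => (Nb t)⁻¹ := by
      rw [continuous_iff_continuousAt]
      intro t₀
      have h1 : ContinuousAt Ring.inverse ((Nb t₀).det) := by
        rw [Ring.inverse_eq_inv']
        exact continuousAt_inv₀ (hdetNb t₀)
      exact (continuousAt_matrix_inv (Nb t₀) h1).comp hNbcont.continuousAt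
    exact hNcont.matrix_mul hNbinv
  refine ⟨γ '' Icc 0 1, (isPreconnected_Icc).image γ hcont.continuousOn, ?_, ?_, ?_⟩
  · rintro - ⟨t, -, rfl⟩; exact hmem t
  · exact ⟨0, ⟨le_rfl, zero_le_one⟩, hγ0⟩
  · exact ⟨1, ⟨zero_le_one, le_rfl⟩, hγ1⟩

end UnitaryConn
section UnitaryConn2

open Matrix Set Complex

variable {n : ℕ}

lemma smul_mem_unitary {U : Matrix (Fin n) (Fin n) ℂ} (hU : U ∈ Matrix.unitaryGroup (Fin n) ℂ)
    {z : ℂ} (hz : ‖z‖ = 1) : z • U ∈ Matrix.unitaryGroup (Fin n) ℂ := by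
  rw [Matrix.mem_unitaryGroup_iff]
  rw [star_smul, Matrix.smul_mul, Matrix.mul_smul, smul_smul]
  have h1 : U * star U = 1 := Matrix.mem_unitaryGroup_iff.mp hU
  rw [h1]
  have h2 : z * star z = 1 := by
    rw [Complex.star_def, Complex.mul_conj, Complex.normSq_eq_norm_sq, hz]
    norm_num
  rw [h2, one_smul]

lemma rotation_path (U : Matrix (Fin n) (Fin n) ℂ) (hU : U ∈ Matrix.unitaryGroup (Fin n) ℂ)
    (c : ℂ) (hc : ‖c‖ = 1) :
    ∃ S : Set (Matrix (Fin n) (Fin n) ℂ), IsPreconnected S ∧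
      S ⊆ (Matrix.unitaryGroup (Fin n) ℂ : Set (Matrix (Fin n) (Fin n) ℂ)) ∧
      U ∈ S ∧ c • U ∈ S := by
  have hc0 : c ≠ 0 := by
    intro h; rw [h] at hc; simp at hc
  set ρ : ℝ → Matrix (Fin n) (Fin n) ℂ := fun t => Complex.exp ((t : ℂ) * Complex.log c) • U
    with hρ
  have habs : ∀ t : ℝ, ‖Complex.exp ((t : ℂ) * Complex.log c)‖ = 1 := by
    intro t
    rw [Complex.norm_exp]
    have : ((t : ℂ) * Complex.log c).re = t * Real.log ‖c‖ := by
      rw [Complex.mul_re, Complex.ofReal_re, Complex.ofReal_im, Complex.log_re]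
      ring
    rw [this, hc, Real.log_one, mul_zero, Real.exp_zero]
  have hcont : Continuous ρ := by
    exact ((Complex.continuous_ofReal.mul continuous_const).cexp).smul continuous_const
  refine ⟨ρ '' Icc 0 1, (isPreconnected_Icc).image ρ hcont.continuousOn, ?_, ?_, ?_⟩
  · rintro - ⟨t, -, rfl⟩
    exact smul_mem_unitary hU (habs t)
  · refine ⟨0, ⟨le_rfl, zero_le_one⟩, ?_⟩
    show Complex.exp (((0 : ℝ) : ℂ) * Complex.log c) • U = U
    norm_num
  · refine ⟨1, ⟨zero_le_one, le_rfl⟩, ?_⟩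
    show Complex.exp (((1 : ℝ) : ℂ) * Complex.log c) • U = c • U
    rw [Complex.ofReal_one, one_mul, Complex.exp_log hc0]

lemma exists_good_scalar (U : Matrix (Fin n) (Fin n) ℂ) :
    ∃ c : ℂ, ‖c‖ = 1 ∧ (c • U + 1).det ≠ 0 := by
  set p : Polynomial ℂ :=
    ((Polynomial.X : Polynomial ℂ) • U.map Polynomial.C + 1).det with hp
  have heval : ∀ z : ℂ, p.eval z = (z • U + 1).det := by
    intro z
    have h1 : (Polynomial.evalRingHom z) p
        = ((Polynomial.evalRingHom z).mapMatrix
            ((Polynomial.X : Polynomial ℂ) • U.map Polynomial.C + 1)).det :=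
      RingHom.map_det _ _
    have h2 : (Polynomial.evalRingHom z).mapMatrix
        ((Polynomial.X : Polynomial ℂ) • U.map Polynomial.C + 1) = z • U + 1 := by
      ext i j
      rw [RingHom.mapMatrix_apply]
      by_cases hij : i = j <;>
        simp only [Matrix.map_apply, Matrix.add_apply, Matrix.smul_apply, Matrix.one_apply, hij,
          smul_eq_mul, if_true, if_false, Polynomial.eval_add, Polynomial.eval_mul,
          Polynomial.eval_one, Polynomial.eval_X, Polynomial.eval_C, ite_true, ite_false] <;>
        simp [Polynomial.coe_evalRingHom] <;> ring
    rw [h2] at h1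
    exact h1
  have hp0 : p ≠ 0 := by
    intro h
    have h1 : p.eval 0 = 1 := by
      rw [heval 0, zero_smul, zero_add, Matrix.det_one]
    rw [h] at h1
    simp at h1
  have hroots : {x : ℂ | p.IsRoot x}.Finite := Polynomial.finite_setOf_isRoot hp0
  have hIoo : (Ioo (0 : ℝ) 1).Infinite := by
    rw [← Set.infinite_coe_iff]
    exact Set.Ioo.infinite zero_lt_one
  have hinj : Set.InjOn (fun θ : ℝ => Complex.exp ((θ : ℂ) * Complex.I)) (Ioo (0 : ℝ) 1) := by
    intro a ha b hb hab
    simp only at hab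
    obtain ⟨k, hk⟩ := Complex.exp_eq_exp_iff_exists_int.mp hab
    have him : a = b + (k : ℝ) * (2 * Real.pi) := by
      have := congrArg Complex.im hk
      simpa [Complex.mul_im, Complex.add_im, Real.pi] using this
    have hπ := Real.pi_gt_three
    rcases lt_trichotomy k 0 with hk0 | hk0 | hk0
    · exfalso
      have : (k : ℝ) ≤ -1 := by exact_mod_cast (by omega : k ≤ -1)
      nlinarith [ha.1, ha.2, hb.1, hb.2]
    · rw [hk0] at him; simpa using him
    · exfalso
      have : (1 : ℝ) ≤ (k : ℝ) := by exact_mod_cast hk0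
      nlinarith [ha.1, ha.2, hb.1, hb.2]
  have himg : ((fun θ : ℝ => Complex.exp ((θ : ℂ) * Complex.I)) '' (Ioo 0 1)).Infinite :=
    hIoo.image hinj
  obtain ⟨c, hcmem, hcroot⟩ := (himg.diff hroots).nonempty
  obtain ⟨θ, -, rfl⟩ := hcmem
  refine ⟨_, Complex.norm_exp_ofReal_mul_I θ, ?_⟩
  rw [← heval]
  exact hcroot

/-- The unitary group is preconnected. -/
lemma unitaryGroup_preconnected (n : ℕ) :
    IsPreconnected ((Matrix.unitaryGroup (Fin n) ℂ : Set (Matrix (Fin n) (Fin n) ℂ))) := by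
  apply isPreconnected_of_forall (1 : Matrix (Fin n) (Fin n) ℂ)
  intro U hU
  obtain ⟨c, hc1, hcdet⟩ := exists_good_scalar U
  have hcU : c • U ∈ Matrix.unitaryGroup (Fin n) ℂ := smul_mem_unitary hU hc1
  have hdetV : ((c • U) + 1).det ≠ 0 := hcdet
  obtain ⟨S₁, hS₁pre, hS₁sub, hUS₁, hcUS₁⟩ := rotation_path U hU c hc1
  obtain ⟨S₂, hS₂pre, hS₂sub, h1S₂, hcUS₂⟩ := cayley_path (c • U) hcU hdetV
  refine ⟨S₁ ∪ S₂, union_subset hS₁sub hS₂sub, Or.inr h1S₂, Or.inl hUS₁, ?_⟩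
  exact IsPreconnected.union (c • U) hcUS₁ hcUS₂ hS₁pre hS₂pre

end UnitaryConn2
end StarAux

open Matrix

theorem stmt_10 {n : ℕ} (C A B : Matrix (Fin n) (Fin n) ℂ) (μ : ℂ)
    (hA : IsStarCenter μ (cNumRange C A)) (hB : IsStarCenter μ (cNumRange C B)) :
    IsStarCenter μ (cNumRangeSet C (segment ℝ A B)) ∧
      ∀ V : Matrix (Fin n) (Fin n) ℂ, V ∈ Matrix.unitaryGroup (Fin n) ℂ →
        convexHull ℝ {μ, (C * Vᴴ * A * V).trace, (C * Vᴴ * B * V).trace}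
          ⊆ cNumRangeSet C (segment ℝ A B) := by
  classical
  set f : Matrix (Fin n) (Fin n) ℂ → ℂ × ℂ :=
    fun U => ((C * Uᴴ * A * U).trace, (C * Uᴴ * B * U).trace) with hf
  set g : ℂ × ℂ → ℂ × ℂ := fun p => (p.1 - μ, p.2 - μ) with hg
  set D : Set (ℂ × ℂ) :=
    g '' (f '' (Matrix.unitaryGroup (Fin n) ℂ : Set (Matrix (Fin n) (Fin n) ℂ))) with hD
  -- expansion of the trace on convex combinations
  have hexp : ∀ (U : Matrix (Fin n) (Fin n) ℂ) (t₁ t₂ : ℝ),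
      (C * Uᴴ * (t₁ • A + t₂ • B) * U).trace
        = t₁ • (C * Uᴴ * A * U).trace + t₂ • (C * Uᴴ * B * U).trace := by
    intro U t₁ t₂
    have hmat : C * Uᴴ * (t₁ • A + t₂ • B) * U
        = t₁ • (C * Uᴴ * A * U) + t₂ • (C * Uᴴ * B * U) := by
      rw [Matrix.mul_add, Matrix.mul_smul, Matrix.mul_smul, Matrix.add_mul,
        Matrix.smul_mul, Matrix.smul_mul]
    rw [hmat, Matrix.trace_add, Matrix.trace_smul, Matrix.trace_smul]
  -- any point on a segment [f U .1, f U .2] is in the range set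
  have hmem_range : ∀ U ∈ Matrix.unitaryGroup (Fin n) ℂ,
      ∀ w ∈ segment ℝ ((C * Uᴴ * A * U).trace) ((C * Uᴴ * B * U).trace),
      w ∈ cNumRangeSet C (segment ℝ A B) := by
    rintro U hU w ⟨t₁, t₂, ht₁, ht₂, ht, rfl⟩
    have hX : t₁ • A + t₂ • B ∈ segment ℝ A B := ⟨t₁, t₂, ht₁, ht₂, ht, rfl⟩
    simp only [cNumRangeSet, Set.mem_iUnion]
    exact ⟨t₁ • A + t₂ • B, hX, U, hU, (hexp U t₁ t₂).symm⟩
  -- D is preconnected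
  have hfcont : Continuous f := by
    apply Continuous.prodMk
    · exact (((continuous_const.matrix_mul
        continuous_id.matrix_conjTranspose).matrix_mul
        continuous_const).matrix_mul continuous_id).matrix_trace
    · exact (((continuous_const.matrix_mul
        continuous_id.matrix_conjTranspose).matrix_mul
        continuous_const).matrix_mul continuous_id).matrix_trace
  have hgcont : Continuous g :=
    (continuous_fst.sub continuous_const).prodMk (continuous_snd.sub continuous_const)
  have hDpre : IsPreconnected D :=
    (((unitaryGroup_preconnected n).image f hfcont.continuousOn).image g hgcont.continuousOn)
  -- shrink properties
  have h1D : ∀ p ∈ D, ∀ s : ℝ, 0 ≤ s → s ≤ 1 → ∃ y', (s • p.1, y') ∈ D := by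
    rintro p ⟨w, ⟨U, hU, rfl⟩, rfl⟩ s hs0 hs1
    have hx : (C * Uᴴ * A * U).trace ∈ cNumRange C A := ⟨U, hU, rfl⟩
    have hwseg : (1 - s) • μ + s • (C * Uᴴ * A * U).trace
        ∈ segment ℝ μ ((C * Uᴴ * A * U).trace) := ⟨1 - s, s, by linarith, hs0, by ring, rfl⟩
    obtain ⟨U', hU', hw'⟩ := hA _ hx hwseg
    refine ⟨(C * U'ᴴ * B * U').trace - μ, ⟨f U', ⟨U', hU', rfl⟩, ?_⟩⟩
    have hcoord : s • ((g (f U)).1) = (C * U'ᴴ * A * U').trace - μ := by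
      rw [← hw']
      show s • ((C * Uᴴ * A * U).trace - μ) = _
      module
    rw [hg]
    dsimp only
    rw [← hcoord]
  have h2D : ∀ p ∈ D, ∀ s : ℝ, 0 ≤ s → s ≤ 1 → ∃ x', (x', s • p.2) ∈ D := by
    rintro p ⟨w, ⟨U, hU, rfl⟩, rfl⟩ s hs0 hs1
    have hy : (C * Uᴴ * B * U).trace ∈ cNumRange C B := ⟨U, hU, rfl⟩
    have hwseg : (1 - s) • μ + s • (C * Uᴴ * B * U).trace
        ∈ segment ℝ μ ((C * Uᴴ * B * U).trace) := ⟨1 - s, s, by linarith, hs0, by ring, rfl⟩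
    obtain ⟨U', hU', hw'⟩ := hB _ hy hwseg
    refine ⟨(C * U'ᴴ * A * U').trace - μ, ⟨f U', ⟨U', hU', rfl⟩, ?_⟩⟩
    have hcoord : s • ((g (f U)).2) = (C * U'ᴴ * B * U').trace - μ := by
      rw [← hw']
      show s • ((C * Uᴴ * B * U).trace - μ) = _
      module
    rw [hg]
    dsimp only
    rw [← hcoord]
  -- the master lemma
  have hmaster : ∀ x y : ℂ,
      (∃ U ∈ Matrix.unitaryGroup (Fin n) ℂ,
        (C * Uᴴ * A * U).trace = x ∧ (C * Uᴴ * B * U).trace = y) →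
      ∀ z ∈ segment ℝ x y, ∀ q ∈ segment ℝ μ z,
        q ∈ cNumRangeSet C (segment ℝ A B) := by
    rintro x y ⟨U, hU, hUx, hUy⟩ z ⟨t₁, t₂, ht₁, ht₂, ht, hz⟩ q ⟨u, v, hu, hv, huv, hquv⟩
    have habD : (x - μ, y - μ) ∈ D := by
      refine ⟨f U, ⟨U, hU, rfl⟩, ?_⟩
      rw [hg]
      dsimp only [hf]
      subst hUx; subst hUy; rfl
    have hq' : q - μ = (v * t₁) • (x - μ) + (v * t₂) • (y - μ) := by
      rw [← hquv, ← hz]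
      have hu' : u = 1 - v := by linarith
      have ht' : t₂ = 1 - t₁ := by linarith
      subst hu'; subst ht'
      module
    obtain ⟨p, hpD, hpseg⟩ := key_lemma D hDpre h1D h2D (q - μ) (x - μ) (y - μ) habD
      (v * t₁) (v * t₂) (mul_nonneg hv ht₁) (mul_nonneg hv ht₂)
      (by rw [← mul_add, ht, mul_one]; linarith) hq'
    obtain ⟨w', ⟨U', hU', rfl⟩, rfl⟩ := hpD
    obtain ⟨u', v', hu'0, hv'0, huv', hq''⟩ := hpseg
    apply hmem_range U' hU'
    refine ⟨u', v', hu'0, hv'0, huv', ?_⟩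
    have : u' • ((g (f U')).1) + v' • ((g (f U')).2) = q - μ := hq''
    rw [hg] at this
    dsimp only [hf] at this ⊢
    have hu'' : u' = 1 - v' := by linarith
    subst hu''
    have hgoal := congrArg (fun w => w + μ) this
    rw [show q - μ + μ = q by ring] at hgoal
    rw [← hgoal]
    module
  constructor
  · -- star center
    intro z hz q hq
    simp only [cNumRangeSet, Set.mem_iUnion] at hz
    obtain ⟨X, hX, U, hU, hzeq⟩ := hz
    obtain ⟨t₁, t₂, ht₁, ht₂, ht, rfl⟩ := hX
    have hzseg : z ∈ segment ℝ ((C * Uᴴ * A * U).trace) ((C * Uᴴ * B * U).trace) := by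
      rw [hzeq, hexp U t₁ t₂]
      exact ⟨t₁, t₂, ht₁, ht₂, ht, rfl⟩
    exact hmaster _ _ ⟨U, hU, rfl, rfl⟩ z hzseg q hq
  · -- triangle
    intro V hV q hq
    rw [show ({μ, (C * Vᴴ * A * V).trace, (C * Vᴴ * B * V).trace} : Set ℂ)
        = insert μ {(C * Vᴴ * A * V).trace, (C * Vᴴ * B * V).trace} from rfl] at hq
    rw [convexHull_insert ⟨(C * Vᴴ * A * V).trace, Set.mem_insert _ _⟩, convexHull_pair] at hq
    rw [mem_convexJoin] at hq
    obtain ⟨m, hm, z, hz, hq'⟩ := hq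
    rw [Set.mem_singleton_iff] at hm
    subst hm
    exact hmaster _ _ ⟨V, hV, rfl, rfl⟩ z hz q hq'
end

section
/- Let C, A, B ∈ M_n(ℂ) be such that W_C(A) and W_C(B) are convex, disjoint, and their union lies on a straight line in ℂ. Then for F = conv{A,B}, W_C(F) = conv(W_C(A) ∪ W_C(B)); in particular W_C(F) is convex. -/
open Matrix

lemma sep_lemma {SA SB : Set ℝ} (hA : Convex ℝ SA) (hB : Convex ℝ SB)
    (hd : Disjoint SA SB) :
    (∀ x ∈ SA, ∀ y ∈ SB, x ≤ y) ∨ (∀ x ∈ SA, ∀ y ∈ SB, y ≤ x) := by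
  by_contra h
  push_neg at h
  obtain ⟨⟨x, hx, y, hy, hyx⟩, ⟨x', hx', y', hy', hx'y'⟩⟩ := h
  rcases le_or_gt y' x with h1 | h1
  · have : y' ∈ SA := hA.ordConnected.out hx' hx ⟨hx'y'.le, h1⟩
    exact Set.disjoint_left.1 hd this hy'
  · have : x ∈ SB := hB.ordConnected.out hy hy' ⟨hyx.le, h1.le⟩
    exact Set.disjoint_left.1 hd hx this

lemma cover_lemma {α α' β β' π : ℝ} (h2 : α ≤ β') (h3 : α' ≤ β) (h4 : α' ≤ β')
    (hπ : π ∈ Set.Icc α β) : π ∈ Set.uIcc α β' ∪ Set.uIcc α' β := by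
  rcases le_or_gt π β' with h | h
  · left; rw [Set.uIcc_of_le h2]; exact ⟨hπ.1, h⟩
  · right; rw [Set.uIcc_of_le h3]; exact ⟨h4.trans h.le, hπ.2⟩

lemma comb_eq {s s' x y : ℝ} {v a : ℂ} (hss : s + s' = 1) :
    s • (x • v + a) + s' • (y • v + a) = (s * x + s' * y) • v + a := by
  rw [smul_add, smul_add, smul_smul, smul_smul, add_add_add_comm, ← add_smul, ← add_smul,
    hss, one_smul]

lemma comb_eq' {s s' y : ℝ} {v a : ℂ} (hss : s + s' = 1) :
    s • a + s' • (y • v + a) = (s' * y) • v + a := by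
  have := comb_eq (s := s) (s' := s') (x := 0) (y := y) (v := v) (a := a) hss
  rw [zero_smul, zero_add, mul_zero, zero_add] at this
  exact this

lemma trace_comb {n : ℕ} (C A B U : Matrix (Fin n) (Fin n) ℂ) (s s' : ℝ) :
    (C * Uᴴ * (s • A + s' • B) * U).trace
      = s • (C * Uᴴ * A * U).trace + s' • (C * Uᴴ * B * U).trace := by
  rw [mul_add, add_mul, Matrix.trace_add, Matrix.mul_smul, Matrix.mul_smul,
    Matrix.smul_mul, Matrix.smul_mul, Matrix.trace_smul, Matrix.trace_smul]

lemma seg_mem {n : ℕ} (C A B U : Matrix (Fin n) (Fin n) ℂ)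
    (hU : U ∈ Matrix.unitaryGroup (Fin n) ℂ) {p : ℂ}
    (hp : p ∈ segment ℝ ((C * Uᴴ * A * U).trace) ((C * Uᴴ * B * U).trace)) :
    p ∈ cNumRangeSet C (segment ℝ A B) := by
  obtain ⟨s, s', hs, hs', hss, hpe⟩ := hp
  refine Set.mem_iUnion₂.2 ⟨s • A + s' • B, ⟨s, s', hs, hs', hss, rfl⟩, U, hU, ?_⟩
  rw [trace_comb]; exact hpe.symm

theorem stmt_12 {n : ℕ} (C A B : Matrix (Fin n) (Fin n) ℂ)
    (hA : Convex ℝ (cNumRange C A)) (hB : Convex ℝ (cNumRange C B))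
    (hd : Disjoint (cNumRange C A) (cNumRange C B))
    (hline : Collinear ℝ (cNumRange C A ∪ cNumRange C B)) :
    cNumRangeSet C (segment ℝ A B)
      = convexHull ℝ (cNumRange C A ∪ cNumRange C B) ∧
    Convex ℝ (cNumRangeSet C (segment ℝ A B)) := by
  have hAne : (cNumRange C A).Nonempty := ⟨_, 1, one_mem _, rfl⟩
  have hBne : (cNumRange C B).Nonempty := ⟨_, 1, one_mem _, rfl⟩
  have hmain : cNumRangeSet C (segment ℝ A B)
      = convexHull ℝ (cNumRange C A ∪ cNumRange C B) := by
    apply Set.Subset.antisymm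
    · intro z hz
      simp only [cNumRangeSet, Set.mem_iUnion] at hz
      obtain ⟨X, hX, U, hU, hz⟩ := hz
      obtain ⟨s, s', hs, hs', hss, hXe⟩ := hX
      rw [← hXe, trace_comb] at hz
      rw [hz]
      have h1 : (C * Uᴴ * A * U).trace ∈ cNumRange C A ∪ cNumRange C B :=
        Set.mem_union_left _ ⟨U, hU, rfl⟩
      have h2 : (C * Uᴴ * B * U).trace ∈ cNumRange C A ∪ cNumRange C B :=
        Set.mem_union_right _ ⟨U, hU, rfl⟩
      exact (convex_convexHull ℝ _) (subset_convexHull ℝ _ h1)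
        (subset_convexHull ℝ _ h2) hs hs' hss
    · intro p hp
      rw [convexHull_union hAne hBne, hA.convexHull_eq, hB.convexHull_eq,
        mem_convexJoin] at hp
      obtain ⟨a, ha, b, hb, hpseg⟩ := hp
      obtain ⟨U, hU, haU⟩ := ha
      obtain ⟨V, hV, hbV⟩ := hb
      have haU' : a ∈ cNumRange C A := ⟨U, hU, haU⟩
      have hbV' : b ∈ cNumRange C B := ⟨V, hV, hbV⟩
      obtain ⟨v, hv⟩ := (collinear_iff_of_mem (Set.mem_union_left _ haU')).1 hline
      simp only [vadd_eq_add] at hv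
      set SA : Set ℝ := {r : ℝ | r • v + a ∈ cNumRange C A} with hSAdef
      set SB : Set ℝ := {r : ℝ | r • v + a ∈ cNumRange C B} with hSBdef
      have hSA : Convex ℝ SA := by
        intro r₁ h₁ r₂ h₂ t t' ht ht' htt
        show (t • r₁ + t' • r₂) • v + a ∈ cNumRange C A
        simp only [smul_eq_mul]
        rw [← comb_eq htt]
        exact hA h₁ h₂ ht ht' htt
      have hSB : Convex ℝ SB := by
        intro r₁ h₁ r₂ h₂ t t' ht ht' htt
        show (t • r₁ + t' • r₂) • v + a ∈ cNumRange C B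
        simp only [smul_eq_mul]
        rw [← comb_eq htt]
        exact hB h₁ h₂ ht ht' htt
      have hSd : Disjoint SA SB := by
        rw [Set.disjoint_left]
        intro r hr1 hr2
        exact Set.disjoint_left.1 hd hr1 hr2
      have ha0 : (0 : ℝ) ∈ SA := by
        show (0 : ℝ) • v + a ∈ cNumRange C A
        rw [zero_smul, zero_add]; exact haU'
      obtain ⟨rb, hrb⟩ := hv b (Set.mem_union_right _ hbV')
      have hrbS : rb ∈ SB := by show rb • v + a ∈ cNumRange C B; rw [← hrb]; exact hbV'
      have ha'W : (C * Vᴴ * A * V).trace ∈ cNumRange C A := ⟨V, hV, rfl⟩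
      have hb'W : (C * Uᴴ * B * U).trace ∈ cNumRange C B := ⟨U, hU, rfl⟩
      obtain ⟨ra', hra'⟩ := hv _ (Set.mem_union_left _ ha'W)
      obtain ⟨rb', hrb'⟩ := hv _ (Set.mem_union_right _ hb'W)
      have hra'S : ra' ∈ SA := by
        show ra' • v + a ∈ cNumRange C A; rw [← hra']; exact ha'W
      have hrb'S : rb' ∈ SB := by
        show rb' • v + a ∈ cNumRange C B; rw [← hrb']; exact hb'W
      obtain ⟨t, t', ht, ht', htt, hpe⟩ := hpseg
      set π : ℝ := t' * rb with hπdef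
      have hpcoord : p = π • v + a := by
        rw [← hpe, hrb, comb_eq' htt]
      have hπseg : π ∈ Set.uIcc (0 : ℝ) rb := by
        rw [← segment_eq_uIcc]
        exact ⟨t, t', ht, ht', htt, by simp [hπdef, smul_eq_mul]⟩
      have hcover : π ∈ Set.uIcc (0 : ℝ) rb' ∪ Set.uIcc ra' rb := by
        rcases sep_lemma hSA hSB hSd with hsep | hsep
        · refine cover_lemma (hsep 0 ha0 rb' hrb'S) (hsep ra' hra'S rb hrbS)
            (hsep ra' hra'S rb' hrb'S) ?_
          rwa [Set.uIcc_of_le (hsep 0 ha0 rb hrbS)] at hπseg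
        · have := cover_lemma (α := rb) (β := 0) (α' := rb') (β' := ra')
            (hsep ra' hra'S rb hrbS) (hsep 0 ha0 rb' hrb'S)
            (hsep ra' hra'S rb' hrb'S)
            (by rwa [Set.uIcc_comm, Set.uIcc_of_le (hsep 0 ha0 rb hrbS)] at hπseg)
          rcases this with h | h
          · right; rwa [Set.uIcc_comm]
          · left; rwa [Set.uIcc_comm]
      rcases hcover with h | h
      · rw [← segment_eq_uIcc] at h
        obtain ⟨s, s', hs, hs', hss, hπe⟩ := h
        refine seg_mem C A B U hU ⟨s, s', hs, hs', hss, ?_⟩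
        have hπ2 : s' * rb' = π := by simpa using hπe
        rw [← haU, hrb', comb_eq' hss, hπ2, hpcoord]
      · rw [← segment_eq_uIcc] at h
        obtain ⟨s, s', hs, hs', hss, hπe⟩ := h
        refine seg_mem C A B V hV ⟨s, s', hs, hs', hss, ?_⟩
        have hπ2 : s * ra' + s' * rb = π := by simpa using hπe
        rw [hra', ← hbV, hrb, comb_eq hss, hπ2, hpcoord]
  exact ⟨hmain, hmain ▸ convex_convexHull ℝ _⟩
end

section
/- Let C = E_{11} ∈ M_2(ℂ), A = diag(1+i, 1−i), and F = conv{A, −A}. Then W_C(F) = conv{0, 1+i, 1−i} ∪ conv{0, −1−i, −1+i}, and this set is not convex. -/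
open Matrix Complex

noncomputable def rot (p : ℝ) : Matrix (Fin 2) (Fin 2) ℂ :=
  !![(Real.sqrt p : ℂ), -(Real.sqrt (1-p) : ℂ); (Real.sqrt (1-p) : ℂ), (Real.sqrt p : ℂ)]

lemma rot_unitary (p : ℝ) (h0 : 0 ≤ p) (h1 : p ≤ 1) : rot p ∈ Matrix.unitaryGroup (Fin 2) ℂ := by
  have hq : (0:ℝ) ≤ 1 - p := by linarith
  have hs : ((Real.sqrt p : ℂ)) ^ 2 = (p:ℂ) := by
    rw [← Complex.ofReal_pow, Real.sq_sqrt h0]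
  have hs' : ((Real.sqrt (1-p) : ℂ)) ^ 2 = ((1-p:ℝ):ℂ) := by
    rw [← Complex.ofReal_pow, Real.sq_sqrt hq]
  rw [Matrix.mem_unitaryGroup_iff']
  ext i j
  fin_cases i <;> fin_cases j <;>
    · simp only [Matrix.mul_apply, Fin.sum_univ_two, Matrix.star_apply, rot]
      simp [Matrix.one_apply, ← sq, hs, hs']
      try push_cast
      try ring

lemma trace_formula (X U : Matrix (Fin 2) (Fin 2) ℂ) :
    ((Matrix.single 0 0 1 : Matrix (Fin 2) (Fin 2) ℂ) * Uᴴ * X * U).trace =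
      (starRingEnd ℂ) (U 0 0) * X 0 0 * U 0 0 + (starRingEnd ℂ) (U 0 0) * X 0 1 * U 1 0
        + (starRingEnd ℂ) (U 1 0) * X 1 0 * U 0 0 + (starRingEnd ℂ) (U 1 0) * X 1 1 * U 1 0 := by
  simp [Matrix.trace_fin_two, Matrix.mul_apply, Fin.sum_univ_two, Matrix.single,
    conjTranspose_apply]
  ring

lemma col_norm (U : Matrix (Fin 2) (Fin 2) ℂ) (hU : U ∈ Matrix.unitaryGroup (Fin 2) ℂ) :
    Complex.normSq (U 0 0) + Complex.normSq (U 1 0) = 1 := by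
  rw [Matrix.mem_unitaryGroup_iff'] at hU
  have h := congrFun (congrFun hU 0) 0
  simp only [Matrix.mul_apply, Fin.sum_univ_two, Matrix.one_apply_eq, Matrix.star_apply] at h
  have : ((Complex.normSq (U 0 0) + Complex.normSq (U 1 0) : ℝ) : ℂ) = 1 := by
    push_cast
    rw [Complex.normSq_eq_conj_mul_self, Complex.normSq_eq_conj_mul_self]
    simpa using h
  exact_mod_cast this

-- forward: every element of the range set has the parametric form
lemma range_param (z : ℂ)
    (hz : z ∈ cNumRangeSet (Matrix.single 0 0 1)
      (segment ℝ (!![1 + I, 0; 0, 1 - I]) (-(!![1 + I, 0; 0, 1 - I])))) :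
    ∃ s p : ℝ, s ∈ Set.Icc (-1:ℝ) 1 ∧ p ∈ Set.Icc (0:ℝ) 1 ∧
      z = s * ((1+I)*p + (1-I)*(1-p)) := by
  simp only [cNumRangeSet, cNumRange, Set.mem_iUnion, Set.mem_setOf_eq] at hz
  obtain ⟨X, hX, U, hU, hzU⟩ := hz
  obtain ⟨a, b, ha, hb, hab, hX⟩ := hX
  have hcol := col_norm U hU
  refine ⟨a - b, Complex.normSq (U 0 0), ⟨by linarith, by linarith⟩,
    ⟨Complex.normSq_nonneg _, by nlinarith [Complex.normSq_nonneg (U 1 0)]⟩, ?_⟩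
  have h00 : X 0 0 = ((a - b : ℝ) : ℂ) * (1 + I) := by
    rw [← hX]; simp [Matrix.smul_apply]; push_cast; ring
  have h11 : X 1 1 = ((a - b : ℝ) : ℂ) * (1 - I) := by
    rw [← hX]; simp [Matrix.smul_apply]; push_cast; ring
  have h01 : X 0 1 = 0 := by rw [← hX]; simp
  have h10 : X 1 0 = 0 := by rw [← hX]; simp
  rw [hzU, trace_formula, h00, h11, h01, h10]
  have e0 : (starRingEnd ℂ) (U 0 0) * U 0 0 = (Complex.normSq (U 0 0) : ℂ) :=
    (Complex.normSq_eq_conj_mul_self).symm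
  have e1 : (starRingEnd ℂ) (U 1 0) * U 1 0 = (Complex.normSq (U 1 0) : ℂ) :=
    (Complex.normSq_eq_conj_mul_self).symm
  have hcolC : (Complex.normSq (U 1 0) : ℂ) = 1 - (Complex.normSq (U 0 0) : ℂ) := by
    have h : Complex.normSq (U 1 0) = 1 - Complex.normSq (U 0 0) := by linarith
    rw [h]; push_cast; ring
  calc (starRingEnd ℂ) (U 0 0) * (((a - b : ℝ) : ℂ) * (1 + I)) * U 0 0
        + (starRingEnd ℂ) (U 0 0) * 0 * U 1 0
        + (starRingEnd ℂ) (U 1 0) * 0 * U 0 0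
        + (starRingEnd ℂ) (U 1 0) * (((a - b : ℝ) : ℂ) * (1 - I)) * U 1 0
      = ((a - b : ℝ) : ℂ) * (1 + I) * ((starRingEnd ℂ) (U 0 0) * U 0 0)
        + ((a - b : ℝ) : ℂ) * (1 - I) * ((starRingEnd ℂ) (U 1 0) * U 1 0) := by ring
    _ = ((a-b:ℝ):ℂ) * ((1+I) * (Complex.normSq (U 0 0) : ℂ)
          + (1-I) * (1 - (Complex.normSq (U 0 0) : ℂ))) := by
        rw [e0, e1, hcolC]; ring
    _ = _ := by push_cast; ring

-- backward: every parametric point is in the range set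
lemma param_mem (s p : ℝ) (hs : s ∈ Set.Icc (-1:ℝ) 1) (hp : p ∈ Set.Icc (0:ℝ) 1) :
    (s : ℂ) * ((1+I)*p + (1-I)*(1-p)) ∈ cNumRangeSet (Matrix.single 0 0 1)
      (segment ℝ (!![1 + I, 0; 0, 1 - I]) (-(!![1 + I, 0; 0, 1 - I]))) := by
  simp only [cNumRangeSet, cNumRange, Set.mem_iUnion, Set.mem_setOf_eq]
  refine ⟨s • !![1 + I, 0; 0, 1 - I], ⟨(1+s)/2, (1-s)/2, by linarith [hs.1], by linarith [hs.2],
    by ring, ?_⟩, rot p, rot_unitary p hp.1 hp.2, ?_⟩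
  · rw [smul_neg, ← sub_eq_add_neg, ← sub_smul]; congr 1; ring
  · rw [trace_formula]
    have hpp : ((Real.sqrt p : ℂ)) * ((Real.sqrt p : ℂ)) = (p:ℂ) := by
      rw [← Complex.ofReal_mul, Real.mul_self_sqrt hp.1]
    have hqq : ((Real.sqrt (1-p) : ℂ)) * ((Real.sqrt (1-p) : ℂ)) = ((1-p:ℝ):ℂ) := by
      rw [← Complex.ofReal_mul, Real.mul_self_sqrt (by linarith [hp.2])]
    simp [rot, Complex.real_smul, Complex.conj_ofReal]
    push_cast at hqq ⊢
    linear_combination (-(↑s * (1+I))) * hpp + (-(↑s * (1-I))) * hqq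

lemma hull1_param (z : ℂ) (hz : z ∈ convexHull ℝ ({0, 1 + I, 1 - I} : Set ℂ)) :
    ∃ s p : ℝ, s ∈ Set.Icc (0:ℝ) 1 ∧ p ∈ Set.Icc (0:ℝ) 1 ∧
      z = s * ((1+I)*p + (1-I)*(1-p)) := by
  rw [show ({0, 1 + I, 1 - I} : Set ℂ) = insert 0 {1+I, 1-I} from rfl,
    convexHull_insert ⟨1+I, Set.mem_insert _ _⟩, convexHull_pair] at hz
  rw [mem_convexJoin] at hz
  obtain ⟨x, hx, w, hw, hzw⟩ := hz
  rw [Set.mem_singleton_iff] at hx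
  subst hx
  obtain ⟨p, q, hp, hq, hpq, hw⟩ := hw
  obtain ⟨a, b, ha, hb, hab, hz⟩ := hzw
  refine ⟨b, p, ⟨hb, by linarith⟩, ⟨hp, by linarith⟩, ?_⟩
  rw [← hz, ← hw]
  simp only [smul_zero, zero_add, Complex.real_smul, smul_add]
  have hq' : q = 1 - p := by linarith
  rw [hq']; push_cast; ring

lemma hull2_param (z : ℂ) (hz : z ∈ convexHull ℝ ({0, -1 - I, -1 + I} : Set ℂ)) :
    ∃ s p : ℝ, s ∈ Set.Icc (-1:ℝ) 0 ∧ p ∈ Set.Icc (0:ℝ) 1 ∧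
      z = s * ((1+I)*p + (1-I)*(1-p)) := by
  rw [show ({0, -1 - I, -1 + I} : Set ℂ) = insert 0 {-1-I, -1+I} from rfl,
    convexHull_insert ⟨-1-I, Set.mem_insert _ _⟩, convexHull_pair] at hz
  rw [mem_convexJoin] at hz
  obtain ⟨x, hx, w, hw, hzw⟩ := hz
  rw [Set.mem_singleton_iff] at hx
  subst hx
  obtain ⟨p, q, hp, hq, hpq, hw⟩ := hw
  obtain ⟨a, b, ha, hb, hab, hz⟩ := hzw
  refine ⟨-b, p, ⟨by linarith, by linarith⟩, ⟨hp, by linarith⟩, ?_⟩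
  rw [← hz, ← hw]
  simp only [smul_zero, zero_add, Complex.real_smul, smul_add]
  have hq' : q = 1 - p := by linarith
  rw [hq']; push_cast; ring

lemma param_hull (s p : ℝ) (hs : s ∈ Set.Icc (-1:ℝ) 1) (hp : p ∈ Set.Icc (0:ℝ) 1) :
    (s : ℂ) * ((1+I)*p + (1-I)*(1-p)) ∈
      convexHull ℝ ({0, 1 + I, 1 - I} : Set ℂ) ∪ convexHull ℝ ({0, -1 - I, -1 + I} : Set ℂ) := by
  rcases le_or_gt 0 s with h | h
  · left
    have hK := convex_convexHull ℝ ({0, 1 + I, 1 - I} : Set ℂ)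
    have h0 : (0:ℂ) ∈ convexHull ℝ ({0, 1 + I, 1 - I} : Set ℂ) :=
      subset_convexHull ℝ _ (by simp)
    have h1 : (1+I:ℂ) ∈ convexHull ℝ ({0, 1 + I, 1 - I} : Set ℂ) :=
      subset_convexHull ℝ _ (by simp)
    have h2 : (1-I:ℂ) ∈ convexHull ℝ ({0, 1 + I, 1 - I} : Set ℂ) :=
      subset_convexHull ℝ _ (by simp)
    have hw : p • (1+I) + (1-p) • (1-I) ∈ convexHull ℝ ({0, 1 + I, 1 - I} : Set ℂ) :=
      hK h1 h2 hp.1 (by linarith [hp.2]) (by ring)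
    have hz : s • (p • (1+I) + (1-p) • (1-I)) + (1-s) • (0:ℂ)
        ∈ convexHull ℝ ({0, 1 + I, 1 - I} : Set ℂ) :=
      hK hw h0 h (by linarith [hs.2]) (by ring)
    convert hz using 1
    simp only [smul_zero, add_zero, Complex.real_smul, smul_add]
    push_cast; ring
  · right
    have hK := convex_convexHull ℝ ({0, -1 - I, -1 + I} : Set ℂ)
    have h0 : (0:ℂ) ∈ convexHull ℝ ({0, -1 - I, -1 + I} : Set ℂ) :=
      subset_convexHull ℝ _ (by simp)
    have h1 : (-1-I:ℂ) ∈ convexHull ℝ ({0, -1 - I, -1 + I} : Set ℂ) :=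
      subset_convexHull ℝ _ (by simp)
    have h2 : (-1+I:ℂ) ∈ convexHull ℝ ({0, -1 - I, -1 + I} : Set ℂ) :=
      subset_convexHull ℝ _ (by simp)
    have hw : p • (-1-I) + (1-p) • (-1+I) ∈ convexHull ℝ ({0, -1 - I, -1 + I} : Set ℂ) :=
      hK h1 h2 hp.1 (by linarith [hp.2]) (by ring)
    have hz : (-s) • (p • (-1-I) + (1-p) • (-1+I)) + (1+s) • (0:ℂ)
        ∈ convexHull ℝ ({0, -1 - I, -1 + I} : Set ℂ) :=
      hK hw h0 (by linarith) (by linarith [hs.1]) (by ring)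
    convert hz using 1
    simp only [smul_zero, add_zero, Complex.real_smul, smul_add]
    push_cast; ring

lemma I_not_mem_hull1 : I ∉ convexHull ℝ ({0, 1 + I, 1 - I} : Set ℂ) := by
  intro h
  have hconv : Convex ℝ {z : ℂ | z.im ≤ z.re} := by
    intro x hx y hy a b ha hb hab
    simp only [Set.mem_setOf_eq, Complex.add_im, Complex.add_re] at *
    have : (a • x).im + (b • y).im ≤ (a • x).re + (b • y).re := by
      simp only [Complex.smul_im, Complex.smul_re, smul_eq_mul]
      nlinarith [mul_le_mul_of_nonneg_left hx ha, mul_le_mul_of_nonneg_left hy hb]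
    exact this
  have hsub : convexHull ℝ ({0, 1 + I, 1 - I} : Set ℂ) ⊆ {z : ℂ | z.im ≤ z.re} := by
    apply convexHull_min _ hconv
    intro w hw
    rcases hw with rfl | rfl | rfl <;> simp
  have := hsub h
  simp at this
  linarith
lemma I_not_mem_hull2 : I ∉ convexHull ℝ ({0, -1 - I, -1 + I} : Set ℂ) := by
  intro h
  have hconv : Convex ℝ {z : ℂ | z.im ≤ -z.re} := by
    intro x hx y hy a b ha hb hab
    simp only [Set.mem_setOf_eq, Complex.add_im, Complex.add_re] at *
    have : (a • x).im + (b • y).im ≤ -((a • x).re + (b • y).re) := by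
      simp only [Complex.smul_im, Complex.smul_re, smul_eq_mul]
      nlinarith [mul_le_mul_of_nonneg_left hx ha, mul_le_mul_of_nonneg_left hy hb]
    exact this
  have hsub : convexHull ℝ ({0, -1 - I, -1 + I} : Set ℂ) ⊆ {z : ℂ | z.im ≤ -z.re} := by
    apply convexHull_min _ hconv
    intro w hw
    rcases hw with rfl | rfl | rfl <;> simp
  have := hsub h
  simp at this
  linarith

theorem stmt_13 (C A : Matrix (Fin 2) (Fin 2) ℂ)
    (hC : C = Matrix.single 0 0 1)
    (hA : A = !![1 + I, 0; 0, 1 - I]) :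
    cNumRangeSet C (segment ℝ A (-A))
        = convexHull ℝ {0, 1 + I, 1 - I} ∪ convexHull ℝ {0, -1 - I, -1 + I} ∧
      ¬ Convex ℝ (cNumRangeSet C (segment ℝ A (-A))) := by
  subst hC hA
  have hEq : cNumRangeSet (Matrix.single 0 0 1)
      (segment ℝ (!![1 + I, 0; 0, 1 - I]) (-(!![1 + I, 0; 0, 1 - I])))
      = convexHull ℝ ({0, 1 + I, 1 - I} : Set ℂ)
        ∪ convexHull ℝ ({0, -1 - I, -1 + I} : Set ℂ) := by
    ext z
    constructor
    · intro hz
      obtain ⟨s, p, hs, hp, rfl⟩ := range_param z hz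
      exact param_hull s p hs hp
    · intro hz
      rcases hz with hz | hz
      · obtain ⟨s, p, hs, hp, rfl⟩ := hull1_param z hz
        exact param_mem s p ⟨by linarith [hs.1], hs.2⟩ hp
      · obtain ⟨s, p, hs, hp, rfl⟩ := hull2_param z hz
        exact param_mem s p ⟨hs.1, by linarith [hs.2]⟩ hp
  refine ⟨hEq, ?_⟩
  rw [hEq]
  intro hconv
  have h1 : (1 + I : ℂ) ∈ convexHull ℝ ({0, 1 + I, 1 - I} : Set ℂ) :=
    subset_convexHull ℝ _ (by simp)
  have h2 : (-1 + I : ℂ) ∈ convexHull ℝ ({0, -1 - I, -1 + I} : Set ℂ) :=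
    subset_convexHull ℝ _ (by simp)
  have hmid := hconv (Set.mem_union_left _ h1) (Set.mem_union_right _ h2)
    (by norm_num : (0:ℝ) ≤ (1:ℝ)/2) (by norm_num : (0:ℝ) ≤ (1:ℝ)/2) (by norm_num)
  have hI : ((1:ℝ)/2) • (1 + I : ℂ) + ((1:ℝ)/2) • (-1 + I : ℂ) = I := by
    simp only [Complex.real_smul]; push_cast; ring
  rw [hI] at hmid
  rcases hmid with h | h
  · exact I_not_mem_hull1 h
  · exact I_not_mem_hull2 h
end

section
/- Let A_1, …, A_m ∈ M_n(ℂ) and F = conv{A_1, …, A_m}. Then W(F) equals the product numerical range W^⊗(A_1 ⊕ ⋯ ⊕ A_m) of the block-diagonal matrix A_1 ⊕ ⋯ ⊕ A_m viewed in M_m ⊗ M_n. -/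
open Matrix

/-- The classical numerical range of a matrix: `{x* X x : x a unit vector}`. -/
def numRange {n : ℕ} (X : Matrix (Fin n) (Fin n) ℂ) : Set ℂ :=
  {z | ∃ x : Fin n → ℂ, star x ⬝ᵥ x = 1 ∧ z = star x ⬝ᵥ X.mulVec x}

/-- The numerical range of a set of matrices: union of the numerical ranges. -/
def numRangeSet {n : ℕ} (F : Set (Matrix (Fin n) (Fin n) ℂ)) : Set ℂ :=
  ⋃ X ∈ F, numRange X

/-- The product numerical range of a matrix on a tensor product space
`ℂⁿ ⊗ ℂᵐ`: values `(u ⊗ v)* B (u ⊗ v)` over unit vectors `u ∈ ℂᵐ`, `v ∈ ℂⁿ`. -/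
def prodNumRange {m n : ℕ} (B : Matrix (Fin n × Fin m) (Fin n × Fin m) ℂ) : Set ℂ :=
  {z | ∃ u : Fin m → ℂ, ∃ v : Fin n → ℂ, star u ⬝ᵥ u = 1 ∧ star v ⬝ᵥ v = 1 ∧
    z = star (fun p : Fin n × Fin m => v p.1 * u p.2) ⬝ᵥ
        B.mulVec (fun p : Fin n × Fin m => v p.1 * u p.2)}

lemma key_blockDiag {m n : ℕ} (A : Fin m → Matrix (Fin n) (Fin n) ℂ) (u : Fin m → ℂ)
    (v : Fin n → ℂ) :
    star (fun p : Fin n × Fin m => v p.1 * u p.2) ⬝ᵥ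
      (Matrix.blockDiagonal A).mulVec (fun p : Fin n × Fin m => v p.1 * u p.2)
    = ∑ k, (starRingEnd ℂ (u k) * u k) * (star v ⬝ᵥ (A k).mulVec v) := by
  simp only [dotProduct, mulVec, Matrix.blockDiagonal_apply, Pi.star_apply, star_mul',
    Complex.star_def]
  rw [Fintype.sum_prod_type]
  rw [Finset.sum_comm]
  refine Finset.sum_congr rfl fun k _ => ?_
  simp only [Finset.mul_sum, Finset.sum_mul]
  refine Finset.sum_congr rfl fun i _ => ?_
  rw [Fintype.sum_prod_type]
  simp only [ite_mul, zero_mul, mul_ite, mul_zero, Finset.sum_ite_eq, Finset.mem_univ, if_true]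
  refine Finset.sum_congr rfl fun j _ => ?_
  ring

lemma lin_numRange {m n : ℕ} (A : Fin m → Matrix (Fin n) (Fin n) ℂ) (c : Fin m → ℝ)
    (x : Fin n → ℂ) :
    star x ⬝ᵥ (∑ k, c k • A k).mulVec x = ∑ k, (c k : ℂ) * (star x ⬝ᵥ (A k).mulVec x) := by
  simp only [dotProduct, mulVec, Matrix.sum_apply, Pi.smul_apply, Matrix.smul_apply,
    Complex.real_smul, Finset.mul_sum, Finset.sum_mul]
  conv_lhs => rw [show (fun (x_1 : Fin n) => ∑ x_2 : Fin n, ∑ i : Fin m,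
    star x x_1 * ((c i : ℂ) * A i x_1 x_2 * x x_2)) = fun x_1 => ∑ i : Fin m, ∑ x_2 : Fin n,
    star x x_1 * ((c i : ℂ) * A i x_1 x_2 * x x_2) from funext fun _ => Finset.sum_comm]
  rw [Finset.sum_comm]
  refine Finset.sum_congr rfl fun k _ => Finset.sum_congr rfl fun i _ =>
    Finset.sum_congr rfl fun j _ => by ring

lemma mem_hull_range {m n : ℕ} (A : Fin m → Matrix (Fin n) (Fin n) ℂ)
    (X : Matrix (Fin n) (Fin n) ℂ) :
    X ∈ convexHull ℝ (Set.range A) ↔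
      ∃ w : Fin m → ℝ, (∀ i, 0 ≤ w i) ∧ ∑ i, w i = 1 ∧ ∑ i, w i • A i = X := by
  constructor
  · intro h
    rw [convexHull_range_eq_exists_affineCombination] at h
    obtain ⟨s, w, hw0, hw1, hX⟩ := h
    refine ⟨fun i => if i ∈ s then w i else 0,
      fun i => by dsimp only; split_ifs with h; exacts [hw0 i h, le_rfl], ?_, ?_⟩
    · rw [Finset.sum_ite_mem, Finset.univ_inter, hw1]
    · rw [← hX, Finset.affineCombination_eq_linear_combination s A w hw1]
      rw [← Finset.sum_subset (Finset.subset_univ s)]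
      · exact Finset.sum_congr rfl fun i hi => by simp [hi]
      · intro i _ hi; simp [hi]
  · rintro ⟨w, hw0, hw1, rfl⟩
    exact (convex_convexHull ℝ _).sum_mem (fun i _ => hw0 i) hw1
      (fun i _ => subset_convexHull ℝ _ ⟨i, rfl⟩)

theorem stmt_14 {m n : ℕ} (A : Fin m → Matrix (Fin n) (Fin n) ℂ) :
    numRangeSet (convexHull ℝ (Set.range A))
      = prodNumRange (Matrix.blockDiagonal A) := by
  ext z
  simp only [numRangeSet, Set.mem_iUnion, numRange, Set.mem_setOf_eq, prodNumRange]
  constructor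
  · rintro ⟨X, hX, x, hx, rfl⟩
    obtain ⟨w, hw0, hw1, rfl⟩ := (mem_hull_range A X).mp hX
    refine ⟨fun k => (Real.sqrt (w k) : ℂ), x, ?_, hx, ?_⟩
    · simp only [dotProduct, Pi.star_apply, Complex.star_def, Complex.conj_ofReal,
        ← Complex.ofReal_mul, Real.mul_self_sqrt (hw0 _), ← Complex.ofReal_sum, hw1,
        Complex.ofReal_one]
    · rw [key_blockDiag A (fun k => (Real.sqrt (w k) : ℂ)) x, lin_numRange]
      refine Finset.sum_congr rfl fun k _ => ?_
      rw [Complex.conj_ofReal, ← Complex.ofReal_mul, Real.mul_self_sqrt (hw0 _)]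
  · rintro ⟨u, v, hu, hv, rfl⟩
    have hkey : ∀ k, starRingEnd ℂ (u k) * u k = ((Complex.normSq (u k) : ℝ) : ℂ) := by
      intro k; rw [mul_comm, Complex.mul_conj]
    have hsum : ∑ k, Complex.normSq (u k) = 1 := by
      have : ((∑ k, Complex.normSq (u k) : ℝ) : ℂ) = ((1 : ℝ) : ℂ) := by
        rw [Complex.ofReal_sum]
        simp only [← hkey]
        simpa [dotProduct] using hu
      exact_mod_cast this
    refine ⟨∑ k, Complex.normSq (u k) • A k, (mem_hull_range A _).mpr
      ⟨fun k => Complex.normSq (u k), fun k => Complex.normSq_nonneg _, hsum, rfl⟩,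
      v, hv, ?_⟩
    rw [key_blockDiag, lin_numRange]
    exact Finset.sum_congr rfl fun k _ => by rw [hkey]
end

section
/- Let A_1, …, A_m ∈ M_n(ℂ) and F = conv{A_1, …, A_m}. For each unit vector x ∈ ℂⁿ, let 𝒜_x = diag(x*A_1x, …, x*A_mx) ∈ M_m(ℂ), and let F̂ = {𝒜_x : x ∈ ℂⁿ, x*x = 1}. Then W(F) = W(F̂) = W(conv F̂). -/
open Matrix Complex

noncomputable section

lemma quad_sum' {k : ℕ} (y : Fin k → ℂ) {ι : Type*} (t : Finset ι)
    (f : ι → Matrix (Fin k) (Fin k) ℂ) (w : ι → ℝ) :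
    star y ⬝ᵥ (∑ i ∈ t, w i • f i).mulVec y
      = ∑ i ∈ t, w i • (star y ⬝ᵥ (f i).mulVec y) := by
  classical
  induction t using Finset.induction with
  | empty => simp
  | insert _ _ hnot ih =>
    rw [Finset.sum_insert hnot, Finset.sum_insert hnot, add_mulVec, dotProduct_add, ih,
      smul_mulVec, dotProduct_smul]


lemma quad_expand {k : ℕ} (M : Matrix (Fin k) (Fin k) ℂ) (u v : Fin k → ℂ) (a b : ℂ) :
    star (a • u + b • v) ⬝ᵥ M.mulVec (a • u + b • v)
      = (starRingEnd ℂ) a * a * (star u ⬝ᵥ M.mulVec u)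
        + (starRingEnd ℂ) a * b * (star u ⬝ᵥ M.mulVec v)
        + (starRingEnd ℂ) b * a * (star v ⬝ᵥ M.mulVec u)
        + (starRingEnd ℂ) b * b * (star v ⬝ᵥ M.mulVec v) := by
  simp only [star_add, star_smul, mulVec_add, mulVec_smul, add_dotProduct, dotProduct_add,
    smul_dotProduct, dotProduct_smul, smul_eq_mul, star_def]
  ring

lemma quad_smul {k : ℕ} (M : Matrix (Fin k) (Fin k) ℂ) (u : Fin k → ℂ) (a : ℂ) :
    star (a • u) ⬝ᵥ M.mulVec (a • u) = (starRingEnd ℂ) a * a * (star u ⬝ᵥ M.mulVec u) := by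
  simp only [star_smul, mulVec_smul, smul_dotProduct, dotProduct_smul, smul_eq_mul, star_def]
  ring

lemma dot_smul_self {k : ℕ} (u : Fin k → ℂ) (a : ℂ) :
    star (a • u) ⬝ᵥ (a • u) = (starRingEnd ℂ) a * a * (star u ⬝ᵥ u) := by
  simpa using quad_smul 1 u a

lemma dot_self_ofReal {k : ℕ} (v : Fin k → ℂ) :
    star v ⬝ᵥ v = ((∑ i, Complex.normSq (v i) : ℝ) : ℂ) := by
  push_cast
  simp [dotProduct, Complex.normSq_eq_conj_mul_self]

/-- The numerical range `{x* X x : x unit}` as a set (local copy of numRange). -/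
theorem numRange_convex' {k : ℕ} (X : Matrix (Fin k) (Fin k) ℂ) :
    Convex ℝ {z | ∃ x : Fin k → ℂ, star x ⬝ᵥ x = 1 ∧ z = star x ⬝ᵥ X.mulVec x} := by
  rintro w ⟨x, hx, rfl⟩ w' ⟨y, hy, rfl⟩ p q hp hq hpq
  set a := star x ⬝ᵥ X.mulVec x with ha
  set c := star y ⬝ᵥ X.mulVec y with hc
  by_cases hac : a = c
  · refine ⟨x, hx, ?_⟩
    rw [← hac, ← add_smul, hpq, one_smul]
  -- nondegenerate case
  have hca : c - a ≠ 0 := sub_ne_zero.mpr (Ne.symm hac)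
  set Y : Matrix (Fin k) (Fin k) ℂ := (c - a)⁻¹ • (X - a • (1 : Matrix (Fin k) (Fin k) ℂ))
    with hY
  have key : ∀ u v : Fin k → ℂ,
      star u ⬝ᵥ X.mulVec v = a * (star u ⬝ᵥ v) + (c - a) * (star u ⬝ᵥ Y.mulVec v) := by
    intro u v
    simp only [hY, smul_mulVec, sub_mulVec, one_mulVec, dotProduct_smul, dotProduct_sub,
      smul_eq_mul]
    field_simp
    ring
  have sxx : star x ⬝ᵥ Y.mulVec x = 0 := by
    have := key x x
    rw [← ha, hx, mul_one] at this
    have h2 : (c - a) * (star x ⬝ᵥ Y.mulVec x) = 0 := by linear_combination -this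
    exact (mul_eq_zero.mp h2).resolve_left hca
  have syy : star y ⬝ᵥ Y.mulVec y = 1 := by
    have := key y y
    rw [← hc, hy, mul_one] at this
    have h2 : (c - a) * (star y ⬝ᵥ Y.mulVec y) = (c - a) * 1 := by
      rw [mul_one]; linear_combination -this
    exact mul_left_cancel₀ hca h2
  -- choose phase
  set A' : ℂ := star x ⬝ᵥ Y.mulVec y with hA'
  set B' : ℂ := star y ⬝ᵥ Y.mulVec x with hB'
  set d : ℂ := A' - (starRingEnd ℂ) B' with hd
  set c0 : ℂ := if d = 0 then 1 else (starRingEnd ℂ) d / (‖d‖ : ℂ) with hc0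
  have hc0norm : (starRingEnd ℂ) c0 * c0 = 1 := by
    rw [hc0]
    split_ifs with h
    · simp
    · have habs : (‖d‖ : ℂ) ≠ 0 := by
        simp [norm_ne_zero_iff.mpr h]
      field_simp
      rw [map_div₀, Complex.conj_conj, Complex.conj_ofReal, mul_div_assoc', div_eq_iff habs,
        ← Complex.normSq_eq_conj_mul_self, Complex.normSq_eq_norm_sq]
      push_cast
      ring
  have hc0d : (c0 * d).im = 0 := by
    rw [hc0]
    split_ifs with h
    · simp [h]
    · have habs : ‖d‖ ≠ 0 := norm_ne_zero_iff.mpr h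
      have : (starRingEnd ℂ) d / (‖d‖ : ℂ) * d = ((‖d‖ : ℝ) : ℂ) := by
        rw [div_mul_eq_mul_div, mul_comm, Complex.mul_conj, Complex.normSq_eq_norm_sq]
        push_cast
        have habs' : (‖d‖ : ℂ) ≠ 0 := by
          exact_mod_cast Complex.ofReal_ne_zero.mpr habs
        field_simp
      rw [this]
      simp
  -- the R value is real
  set Rc : ℂ := c0 * A' + (starRingEnd ℂ) c0 * B' with hRc
  have hRim : Rc.im = 0 := by
    have : Rc = c0 * d + (c0 * (starRingEnd ℂ) B' + (starRingEnd ℂ) (c0 * (starRingEnd ℂ) B')) := by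
      rw [hRc, hd]
      simp only [_root_.map_mul, RingHom.id_apply, Complex.conj_conj]
      ring
    rw [this, Complex.add_conj]
    simp [hc0d]
  have hRcre : ((Rc.re : ℝ) : ℂ) = Rc := Complex.ext (by simp) (by simp [hRim])
  set R : ℝ := Rc.re with hR
  -- similarly for the inner product
  set Sc : ℂ := c0 * (star x ⬝ᵥ y) + (starRingEnd ℂ) c0 * (star y ⬝ᵥ x) with hSc
  have hyx : star y ⬝ᵥ x = (starRingEnd ℂ) (star x ⬝ᵥ y) := by
    rw [star_dotProduct]
    simp
  have hSim : Sc.im = 0 := by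
    have : Sc = c0 * (star x ⬝ᵥ y) + (starRingEnd ℂ) (c0 * (star x ⬝ᵥ y)) := by
      rw [hSc, hyx]; simp only [_root_.map_mul]; try ring
    rw [this, Complex.add_conj]
    simp
  have hScre : ((Sc.re : ℝ) : ℂ) = Sc := Complex.ext (by simp) (by simp [hSim])
  set S : ℝ := Sc.re with hS
  -- the path
  set y' : Fin k → ℂ := c0 • y with hy'
  set z : ℝ → (Fin k → ℂ) := fun t => (((1 - t : ℝ)) : ℂ) • x + ((t : ℝ) : ℂ) • y' with hz
  have hsy'y' : star y' ⬝ᵥ Y.mulVec y' = 1 := by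
    rw [hy', quad_smul, syy, mul_one, hc0norm]
  have hey'y' : star y' ⬝ᵥ y' = 1 := by
    rw [hy', dot_smul_self, hy, mul_one, hc0norm]
  have hsxy' : star x ⬝ᵥ Y.mulVec y' = c0 * A' := by
    rw [hy', mulVec_smul, dotProduct_smul, smul_eq_mul, ← hA']
  have hsy'x : star y' ⬝ᵥ Y.mulVec x = (starRingEnd ℂ) c0 * B' := by
    rw [hy', star_smul, smul_dotProduct, smul_eq_mul, ← hB', star_def]
  have hexy' : star x ⬝ᵥ y' = c0 * (star x ⬝ᵥ y) := by
    rw [hy', dotProduct_smul, smul_eq_mul]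
  have hey'x : star y' ⬝ᵥ x = (starRingEnd ℂ) c0 * (star y ⬝ᵥ x) := by
    rw [hy', star_smul, smul_dotProduct, smul_eq_mul, star_def]
  have hZval : ∀ t : ℝ, star (z t) ⬝ᵥ Y.mulVec (z t)
      = ((t ^ 2 + t * (1 - t) * R : ℝ) : ℂ) := by
    intro t
    rw [hz]
    rw [quad_expand Y x y' ((1 - t : ℝ) : ℂ) ((t : ℝ) : ℂ)]
    rw [sxx, hsxy', hsy'x, hsy'y']
    rw [Complex.conj_ofReal, Complex.conj_ofReal]
    have : ((t:ℂ)) * ((1-t:ℝ):ℂ) * Rc = ((t * (1 - t) * R : ℝ) : ℂ) := by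
      rw [← hRcre]; push_cast; ring
    push_cast
    rw [hRc] at this
    push_cast at this
    linear_combination this
  have hNval : ∀ t : ℝ, star (z t) ⬝ᵥ (z t)
      = (((1 - t) ^ 2 + t * (1 - t) * S + t ^ 2 : ℝ) : ℂ) := by
    intro t
    rw [hz]
    have h := quad_expand 1 x y' ((1 - t : ℝ) : ℂ) ((t : ℝ) : ℂ)
    simp only [one_mulVec] at h
    rw [h, hx, hexy', hey'x, hey'y']
    rw [Complex.conj_ofReal, Complex.conj_ofReal]
    have : ((1-t:ℝ):ℂ) * (t:ℂ) * Sc = ((t * (1 - t) * S : ℝ) : ℂ) := by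
      rw [← hScre]; push_cast; ring
    push_cast
    rw [hSc] at this
    push_cast at this
    linear_combination this
  set NR : ℝ → ℝ := fun t => (1 - t) ^ 2 + t * (1 - t) * S + t ^ 2 with hNR
  have hzne : ∀ t ∈ Set.Icc (0:ℝ) 1, z t ≠ 0 := by
    intro t ht h0
    by_cases ht0 : t = 0
    · rw [hz] at h0
      simp only [ht0] at h0
      push_cast at h0
      simp at h0
      rw [h0] at hx
      simp at hx
    · have htC : (t : ℂ) ≠ 0 := by exact_mod_cast ht0
      have h1 : ((t : ℝ) : ℂ) • y' = ((-(1 - t) : ℝ) : ℂ) • x := by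
        funext i
        have h2 := congrFun h0 i
        simp only [hz, Pi.add_apply, Pi.smul_apply, smul_eq_mul, Pi.zero_apply] at h2
        simp only [Pi.smul_apply, smul_eq_mul]
        push_cast at h2 ⊢
        linear_combination h2
      have e1 : star (((t : ℝ) : ℂ) • y') ⬝ᵥ Y.mulVec (((t : ℝ) : ℂ) • y')
          = (t : ℂ) * (t : ℂ) := by
        rw [quad_smul, hsy'y', Complex.conj_ofReal]; ring
      have e2 : star (((t : ℝ) : ℂ) • y') ⬝ᵥ Y.mulVec (((t : ℝ) : ℂ) • y') = 0 := by
        rw [h1, quad_smul, sxx]; ring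
      rw [e2] at e1
      exact htC (mul_self_eq_zero.mp e1.symm)
  have hNpos : ∀ t ∈ Set.Icc (0:ℝ) 1, 0 < NR t := by
    intro t ht
    have hcoe : ((NR t : ℝ) : ℂ) = star (z t) ⬝ᵥ (z t) := (hNval t).symm
    have hnonneg : 0 ≤ NR t := by
      have := dot_self_ofReal (z t)
      rw [this] at hcoe
      have : NR t = ∑ i, Complex.normSq (z t i) := by exact_mod_cast hcoe
      rw [this]
      exact Finset.sum_nonneg fun i _ => Complex.normSq_nonneg _
    have hsum : NR t = ∑ i, Complex.normSq (z t i) := by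
      have h3 := dot_self_ofReal (z t)
      rw [h3] at hcoe
      exact_mod_cast hcoe
    rcases hnonneg.lt_or_eq with h | h
    · exact h
    · exfalso
      apply hzne t ht
      have hall := (Finset.sum_eq_zero_iff_of_nonneg
        (fun i _ => Complex.normSq_nonneg (z t i))).mp (by rw [← hsum, ← h])
      funext i
      exact Complex.normSq_eq_zero.mp (hall i (Finset.mem_univ i))
  set g : ℝ → ℝ := fun t => (t ^ 2 + t * (1 - t) * R) / NR t with hg
  have hg0 : g 0 = 0 := by norm_num [hg, hNR]
  have hg1 : g 1 = 1 := by norm_num [hg, hNR]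
  have hgcont : ContinuousOn g (Set.Icc 0 1) := by
    apply ContinuousOn.div
    · refine Continuous.continuousOn ?_
      fun_prop
    · refine Continuous.continuousOn ?_
      rw [hNR]
      fun_prop
    · intro t ht
      exact (hNpos t ht).ne'
  have hq01 : q ∈ Set.Icc (0:ℝ) 1 := by
    constructor
    · exact hq
    · nlinarith
  have hiv : Set.Icc (g 0) (g 1) ⊆ g '' Set.Icc 0 1 :=
    intermediate_value_Icc (by norm_num) hgcont
  rw [hg0, hg1] at hiv
  obtain ⟨t0, ht0, hgt0⟩ := hiv hq01
  -- final unit vector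
  set ν : ℝ := NR t0 with hν
  have hνpos : 0 < ν := hNpos t0 ht0
  set μ : ℂ := (((Real.sqrt ν)⁻¹ : ℝ) : ℂ) with hμ
  set u : Fin k → ℂ := μ • z t0 with hu
  have hμμ : (starRingEnd ℂ) μ * μ = ((ν⁻¹ : ℝ) : ℂ) := by
    rw [hμ, Complex.conj_ofReal, ← Complex.ofReal_mul]
    congr 1
    rw [← Real.sqrt_inv, Real.mul_self_sqrt (inv_nonneg.mpr hνpos.le)]
  have huu : star u ⬝ᵥ u = 1 := by
    rw [hu, dot_smul_self, hμμ, hNval t0]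
    have hexp : (1 - t0) ^ 2 + t0 * (1 - t0) * S + t0 ^ 2 = ν := by rw [hν]
    rw [hexp, ← Complex.ofReal_mul, inv_mul_cancel₀ hνpos.ne', Complex.ofReal_one]
  refine ⟨u, huu, ?_⟩
  have hYu : star u ⬝ᵥ Y.mulVec u = ((q : ℝ) : ℂ) := by
    rw [hu, quad_smul, hμμ, hZval t0]
    have hq' : ((q : ℝ) : ℂ) = (((t0 ^ 2 + t0 * (1 - t0) * R) / ν : ℝ) : ℂ) := by
      rw [← hgt0, hg, hν]
    rw [hq']
    push_cast
    ring
  rw [key u u, huu, mul_one, hYu]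
  have hp' : (p : ℂ) = 1 - (q : ℂ) := by
    have : p = 1 - q := by linarith
    rw [this]; push_cast; ring
  rw [Complex.real_smul, Complex.real_smul, hp']
  ring

lemma diag_quad {k : ℕ} (dd : Fin k → ℂ) (y : Fin k → ℂ) :
    star y ⬝ᵥ (Matrix.diagonal dd).mulVec y
      = ∑ j, ((Complex.normSq (y j) : ℝ) : ℂ) * dd j := by
  simp only [dotProduct, mulVec_diagonal, Pi.star_apply]
  refine Finset.sum_congr rfl fun j _ => ?_
  have hnsq : ((Complex.normSq (y j) : ℝ) : ℂ) = star (y j) * y j :=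
    Complex.normSq_eq_conj_mul_self
  linear_combination -dd j * hnsq

lemma mem_numRangeSet {k : ℕ} {F : Set (Matrix (Fin k) (Fin k) ℂ)} {z : ℂ}
    (X : Matrix (Fin k) (Fin k) ℂ) (hX : X ∈ F) (hz : z ∈ numRange X) :
    z ∈ numRangeSet F :=
  Set.mem_biUnion hX hz

theorem numRange_convex {k : ℕ} (X : Matrix (Fin k) (Fin k) ℂ) :
    Convex ℝ (numRange X) :=
  numRange_convex' X

theorem stmt_15 {m n : ℕ} (A : Fin m → Matrix (Fin n) (Fin n) ℂ)
    (Fhat : Set (Matrix (Fin m) (Fin m) ℂ))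
    (hFhat : Fhat = {M | ∃ x : Fin n → ℂ, star x ⬝ᵥ x = 1 ∧
      M = Matrix.diagonal fun i => star x ⬝ᵥ (A i).mulVec x}) :
    numRangeSet (convexHull ℝ (Set.range A)) = numRangeSet Fhat ∧
      numRangeSet Fhat = numRangeSet (convexHull ℝ Fhat) := by
  classical
  -- Inclusion 1 : W(conv range A) ⊆ W(Fhat)
  have h1 : numRangeSet (convexHull ℝ (Set.range A)) ⊆ numRangeSet Fhat := by
    rintro z hz
    obtain ⟨X, hX, hzX⟩ := Set.mem_iUnion₂.mp hz
    obtain ⟨x, hx, rfl⟩ := hzX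
    rw [convexHull_eq] at hX
    obtain ⟨ι, t, w, f, hw0, hw1, hmem, hcm⟩ := hX
    choose g0 hg0 using hmem
    have htne : t.Nonempty := by
      by_contra hte
      rw [Finset.not_nonempty_iff_eq_empty] at hte
      rw [hte, Finset.sum_empty] at hw1
      exact one_ne_zero hw1.symm
    obtain ⟨i0, hi0⟩ := htne
    set g : ι → Fin m := fun i => if h : i ∈ t then g0 i h else g0 i0 hi0 with hgdef
    have hg : ∀ i ∈ t, A (g i) = f i := by
      intro i hi
      rw [hgdef]
      simp only [dif_pos hi]
      exact hg0 i hi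
    have hXsum : X = ∑ i ∈ t, w i • f i := by
      rw [← hcm, Finset.centerMass_eq_of_sum_1 _ _ hw1]
    set d : Fin m → ℂ := fun j => star x ⬝ᵥ (A j).mulVec x with hd
    set cw : Fin m → ℝ := fun j => ∑ i ∈ t.filter (fun i => g i = j), w i with hcw
    have hcw0 : ∀ j, 0 ≤ cw j := fun j =>
      Finset.sum_nonneg fun i hi => hw0 i (Finset.mem_filter.mp hi).1
    have hcw1 : ∑ j, cw j = 1 := by
      rw [hcw, ← hw1]
      exact Finset.sum_fiberwise t g w
    have hval : star x ⬝ᵥ X.mulVec x = ∑ j, (cw j : ℂ) * d j := by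
      rw [hXsum, quad_sum' x t f w]
      rw [Finset.sum_congr rfl (fun i hi => by simp only [hd]; rw [hg i hi] : ∀ i ∈ t,
        w i • (star x ⬝ᵥ (f i).mulVec x) = w i • d (g i))]
      rw [← Finset.sum_fiberwise t g (fun i => w i • d (g i))]
      refine Finset.sum_congr rfl fun j _ => ?_
      rw [Finset.sum_congr rfl (fun i hi => by
        rw [(Finset.mem_filter.mp hi).2] : ∀ i ∈ t.filter (fun i => g i = j),
          w i • d (g i) = w i • d j)]
      rw [← Finset.sum_smul, hcw, Complex.real_smul]
    set v : Fin m → ℂ := fun j => ((Real.sqrt (cw j) : ℝ) : ℂ) with hv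
    have hvsq : ∀ j, v j * v j = ((cw j : ℝ) : ℂ) := by
      intro j
      rw [hv, ← Complex.ofReal_mul, Real.mul_self_sqrt (hcw0 j)]
    have hvstar : ∀ j, star (v j) = v j := by
      intro j
      rw [hv]
      exact Complex.conj_ofReal _
    have hvv : star v ⬝ᵥ v = 1 := by
      have : star v ⬝ᵥ v = ∑ j, ((cw j : ℝ) : ℂ) := by
        simp only [dotProduct, Pi.star_apply]
        refine Finset.sum_congr rfl fun j _ => ?_
        rw [hvstar j, hvsq j]
      rw [this]
      exact_mod_cast congrArg (fun r : ℝ => (r : ℂ)) hcw1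
    have hvd : star v ⬝ᵥ (Matrix.diagonal d).mulVec v = ∑ j, (cw j : ℂ) * d j := by
      simp only [dotProduct, mulVec_diagonal, Pi.star_apply]
      refine Finset.sum_congr rfl fun j _ => ?_
      rw [hvstar j]
      linear_combination d j * hvsq j
    refine mem_numRangeSet (Matrix.diagonal d) ?_ ⟨v, hvv, ?_⟩
    · rw [hFhat]
      exact ⟨x, hx, rfl⟩
    · rw [hval, ← hvd]
  -- Inclusion 2 : W(Fhat) ⊆ W(conv Fhat)
  have h2 : numRangeSet Fhat ⊆ numRangeSet (convexHull ℝ Fhat) := by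
    intro z hz
    obtain ⟨X, hX, hzX⟩ := Set.mem_iUnion₂.mp hz
    exact Set.mem_biUnion (subset_convexHull ℝ _ hX) hzX
  -- Inclusion 3 : W(conv Fhat) ⊆ W(conv range A)
  have h3 : numRangeSet (convexHull ℝ Fhat) ⊆
      numRangeSet (convexHull ℝ (Set.range A)) := by
    rintro z hz
    obtain ⟨M, hM, hzM⟩ := Set.mem_iUnion₂.mp hz
    obtain ⟨y, hy, rfl⟩ := hzM
    rw [convexHull_eq] at hM
    obtain ⟨ι, t, w, f, hw0, hw1, hmem, hcm⟩ := hM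
    rw [hFhat] at hmem
    choose xj hxj1 hxj2 using hmem
    have hMsum : M = ∑ i ∈ t, w i • f i := by
      rw [← hcm, Finset.centerMass_eq_of_sum_1 _ _ hw1]
    set r : Fin m → ℝ := fun j => Complex.normSq (y j) with hr
    have hr0 : ∀ j, 0 ≤ r j := fun j => Complex.normSq_nonneg _
    have hr1 : ∑ j, r j = 1 := by
      have := dot_self_ofReal y
      rw [hy] at this
      exact_mod_cast this.symm
    set B : Matrix (Fin n) (Fin n) ℂ := ∑ j, r j • A j with hB
    have hBmem : B ∈ convexHull ℝ (Set.range A) :=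
      (convex_convexHull ℝ (Set.range A)).sum_mem (fun j _ => hr0 j) hr1
        (fun j _ => subset_convexHull ℝ _ (Set.mem_range_self j))
    -- the value of each diagonal matrix at y equals the value of B at xj
    have hdiag : ∀ i (hi : i ∈ t), star y ⬝ᵥ (f i).mulVec y
        = star (xj i hi) ⬝ᵥ B.mulVec (xj i hi) := by
      intro i hi
      rw [hxj2 i hi, diag_quad, hB, quad_sum' (xj i hi) Finset.univ A r]
      refine Finset.sum_congr rfl fun j _ => ?_
      rw [Complex.real_smul, hr]
    set zf : ι → ℂ := fun i => if h : i ∈ t then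
      star (xj i h) ⬝ᵥ B.mulVec (xj i h) else 0 with hzf
    have hzfm : ∀ i ∈ t, zf i ∈ numRange B := by
      intro i hi
      exact ⟨xj i hi, hxj1 i hi, by rw [hzf]; simp only [dif_pos hi]⟩
    have hzval : star y ⬝ᵥ M.mulVec y = ∑ i ∈ t, w i • zf i := by
      rw [hMsum, quad_sum' y t f w]
      refine Finset.sum_congr rfl fun i hi => ?_
      rw [hdiag i hi, hzf]
      simp only [dif_pos hi]
    have hmemB : star y ⬝ᵥ M.mulVec y ∈ numRange B := by
      rw [hzval]
      exact (numRange_convex B).sum_mem hw0 hw1 hzfm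
    exact mem_numRangeSet B hBmem hmemB
  exact ⟨le_antisymm h1 (h2.trans h3), le_antisymm h2 (h3.trans h1)⟩
end
end

section
/- Let C ∈ M_n(ℂ), G ⊆ M_n(ℂ), F = conv G. If μ is a boundary point of W_C(F), then there exist B_1, B_2 ∈ G and a unitary V such that μ ∈ conv{tr(CV*B_1V), tr(CV*B_2V)}, i.e., μ lies on a segment between two points tr(CV*B_jV). -/
open Matrix

section Planar

def lfun (a b : ℝ) : ℂ → ℝ := fun z => a * z.re + b * z.im

lemma lfun_isLinear (a b : ℝ) : IsLinearMap ℝ (lfun a b) := by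
  constructor
  · intro x y; simp [lfun]; ring
  · intro c x; simp [lfun, Complex.real_smul]; ring

lemma lfun_inj {a b : ℝ} (hab : ¬ (a = 0 ∧ b = 0)) {z : ℂ}
    (h1 : lfun a b z = 0) (h2 : lfun (-b) a z = 0) : z = 0 := by
  have hs : a * a + b * b ≠ 0 := by
    rcases not_and_or.mp hab with h | h
    · nlinarith [mul_self_nonneg b, mul_self_pos.mpr h]
    · nlinarith [mul_self_nonneg a, mul_self_pos.mpr h]
  simp only [lfun] at h1 h2
  have hre : (a * a + b * b) * z.re =
      a * (a * z.re + b * z.im) - b * (-b * z.re + a * z.im) := by ring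
  have him : (a * a + b * b) * z.im =
      b * (a * z.re + b * z.im) + a * (-b * z.re + a * z.im) := by ring
  rw [h1, h2] at hre him
  simp only [mul_zero, sub_zero, add_zero, zero_add, mul_eq_zero] at hre him
  exact Complex.ext (by simpa [hs] using hre) (by simpa [hs] using him)

lemma lfun_sub_combo (a b t1 t2 : ℝ) (μ x y : ℂ) :
    lfun a b (μ - (t1 • x + t2 • y)) =
      lfun a b μ - (t1 * lfun a b x + t2 * lfun a b y) := by
  simp [lfun, Complex.real_smul, Complex.sub_re, Complex.sub_im, Complex.add_re,
    Complex.add_im, Complex.mul_re, Complex.mul_im]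
  ring

/-- Linear-map version of `lfun` decomposition. -/
lemma lm_eq (f : ℂ →ₗ[ℝ] ℝ) (z : ℂ) : f z = lfun (f 1) (f Complex.I) z := by
  have hz : z = z.re • (1 : ℂ) + z.im • Complex.I := by
    simp [Complex.real_smul, Complex.re_add_im]
  calc f z = f (z.re • (1 : ℂ) + z.im • Complex.I) := by rw [← hz]
    _ = z.re • f 1 + z.im • f Complex.I := by
        rw [map_add, _root_.map_smul, _root_.map_smul]
    _ = lfun (f 1) (f Complex.I) z := by simp [lfun, smul_eq_mul]; ring

/-- If `μ` lies in the hull of a finite set where `lfun a b` is constant `= lfun a b μ`,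
then `μ` is on a segment between two points of the set. -/
lemma segment_of_line {s : Finset ℂ} {μ : ℂ} {a b : ℝ} (hab : ¬ (a = 0 ∧ b = 0))
    (hconst : ∀ z ∈ s, lfun a b z = lfun a b μ)
    (hμ : μ ∈ convexHull ℝ (s : Set ℂ)) :
    ∃ x ∈ s, ∃ y ∈ s, μ ∈ segment ℝ x y := by
  have hne : s.Nonempty := by
    rcases s.eq_empty_or_nonempty with h | h
    · subst h; simp at hμ
    · exact h
  obtain ⟨x, hx, hxmin⟩ := s.exists_min_image (lfun (-b) a) hne
  obtain ⟨y, hy, hymax⟩ := s.exists_max_image (lfun (-b) a) hne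
  have hglin := lfun_isLinear (-b) a
  have hgx : lfun (-b) a x ≤ lfun (-b) a μ :=
    convexHull_min (fun z hz => hxmin z hz) (convex_halfSpace_ge hglin _) hμ
  have hgy : lfun (-b) a μ ≤ lfun (-b) a y :=
    convexHull_min (fun z hz => hymax z hz) (convex_halfSpace_le hglin _) hμ
  have hseg : lfun (-b) a μ ∈ segment ℝ (lfun (-b) a x) (lfun (-b) a y) := by
    rw [segment_eq_Icc (hgx.trans hgy)]; exact ⟨hgx, hgy⟩
  obtain ⟨t1, t2, ht1, ht2, hsum, hcmb⟩ := hseg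
  refine ⟨x, hx, y, hy, t1, t2, ht1, ht2, hsum, ?_⟩
  have hz : μ - (t1 • x + t2 • y) = 0 := by
    apply lfun_inj hab
    · rw [lfun_sub_combo, hconst x hx, hconst y hy]
      have : (t1 + t2) * lfun a b μ = lfun a b μ := by rw [hsum, one_mul]
      linarith [this]
    · rw [lfun_sub_combo]
      have : t1 * lfun (-b) a x + t2 * lfun (-b) a y = lfun (-b) a μ := by
        simpa [smul_eq_mul] using hcmb
      linarith [this]
  have := sub_eq_zero.mp hz
  exact this.symm

/-- Support-restriction step: if `lfun a b ≤ lfun a b μ` on `s` and `μ` is in the hull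
of `s`, then `μ` is in the hull of the maximizers. -/
lemma mem_convexHull_filter {s : Finset ℂ} {μ : ℂ} (a b : ℝ)
    (hle : ∀ z ∈ s, lfun a b z ≤ lfun a b μ)
    (hμ : μ ∈ convexHull ℝ (s : Set ℂ)) :
    μ ∈ convexHull ℝ (({z ∈ s | lfun a b z = lfun a b μ} : Finset ℂ) : Set ℂ) := by
  rw [Finset.convexHull_eq] at hμ
  obtain ⟨w, hw0, hw1, hcm⟩ := hμ
  set f := lfun a b with hf
  set flin := IsLinearMap.mk' (lfun a b) (lfun_isLinear a b) with hflin
  have hμsum : μ = ∑ z ∈ s, w z • z := by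
    rw [← hcm, Finset.centerMass_eq_of_sum_1 _ id hw1]; rfl
  have hfsum : f μ = ∑ z ∈ s, w z * f z := by
    rw [hμsum]
    have h1 : f (∑ z ∈ s, w z • z) = flin (∑ z ∈ s, w z • z) := rfl
    rw [h1, map_sum]
    refine Finset.sum_congr rfl fun z _ => ?_
    rw [_root_.map_smul]; rfl
  have hsum0 : ∑ z ∈ s, w z * (f μ - f z) = 0 := by
    have : ∑ z ∈ s, w z * (f μ - f z)
        = (∑ z ∈ s, w z) * f μ - ∑ z ∈ s, w z * f z := by
      rw [Finset.sum_mul, ← Finset.sum_sub_distrib]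
      congr 1; ext z; ring
    rw [this, hw1, one_mul, ← hfsum, sub_self]
  have hterm : ∀ z ∈ s, w z * (f μ - f z) = 0 :=
    (Finset.sum_eq_zero_iff_of_nonneg (fun z hz =>
      mul_nonneg (hw0 z hz) (sub_nonneg.mpr (hle z hz)))).mp hsum0
  have hmax : ∀ z ∈ s, w z ≠ 0 → f z = f μ := by
    intro z hz hwz
    rcases mul_eq_zero.mp (hterm z hz) with h | h
    · exact absurd h hwz
    · linarith [sub_eq_zero.mp h]
  have hcm' : ({z ∈ s | w z ≠ 0} : Finset ℂ).centerMass w id = μ := by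
    rw [Finset.centerMass_filter_ne_zero, hcm]
  have hmem : ({z ∈ s | w z ≠ 0} : Finset ℂ).centerMass w id ∈
      convexHull ℝ (({z ∈ s | lfun a b z = lfun a b μ} : Finset ℂ) : Set ℂ) := by
    apply Finset.centerMass_mem_convexHull
    · intro i hi; exact hw0 i (Finset.mem_filter.mp hi).1
    · rw [Finset.sum_filter_ne_zero, hw1]; exact one_pos
    · intro i hi
      obtain ⟨his, hwi⟩ := Finset.mem_filter.mp hi
      exact Finset.mem_coe.mpr (Finset.mem_filter.mpr ⟨his, hmax i his hwi⟩)
  exact hcm' ▸ hmem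

/-- Existence of a supporting functional at a non-interior hull point. -/
lemma exists_support {s : Finset ℂ} {μ : ℂ}
    (hμ : μ ∈ convexHull ℝ (s : Set ℂ))
    (hni : μ ∉ interior (convexHull ℝ (s : Set ℂ))) :
    ∃ a b : ℝ, ¬ (a = 0 ∧ b = 0) ∧ ∀ z ∈ s, lfun a b z ≤ lfun a b μ := by
  by_cases hint : (interior (convexHull ℝ (s : Set ℂ))).Nonempty
  · obtain ⟨f, hf⟩ := geometric_hahn_banach_open_point
      ((convex_convexHull ℝ (s : Set ℂ)).interior) isOpen_interior hni
    obtain ⟨p, hp⟩ := hint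
    refine ⟨f 1, f Complex.I, ?_, ?_⟩
    · rintro ⟨h1, hI⟩
      have hz : ∀ z : ℂ, f z = 0 := by
        intro z
        have := lm_eq (f : ℂ →ₗ[ℝ] ℝ) z
        simp only [ContinuousLinearMap.coe_coe] at this
        rw [this, h1, hI]
        simp [lfun]
      have := hf p hp
      simp [hz] at this
    · intro z hz
      have hfeq : ∀ w : ℂ, f w = lfun (f 1) (f Complex.I) w := by
        intro w
        have := lm_eq (f : ℂ →ₗ[ℝ] ℝ) w
        simpa using this
      rw [← hfeq, ← hfeq]
      -- show f z ≤ f μ using combinations with the interior point p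
      by_contra hlt
      push_neg at hlt
      have key : ∀ t : ℝ, 0 < t → t ≤ 1 → f z - f μ < t * (f z - f p) := by
        intro t ht ht1
        have hmem : (1 - t) • z + t • p ∈ interior (convexHull ℝ (s : Set ℂ)) :=
          (convex_convexHull ℝ (s : Set ℂ)).combo_closure_interior_mem_interior
            (subset_closure (subset_convexHull ℝ _ hz)) hp (by linarith) ht (by ring)
        have := hf _ hmem
        simp only [map_add, _root_.map_smul, smul_eq_mul] at this
        nlinarith
      set d := f z - f μ with hd
      have hdpos : 0 < d := sub_pos.mpr hlt
      set e := f z - f p with he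
      rcases le_or_gt e 0 with hle | hpos
      · have := key 1 one_pos le_rfl
        nlinarith
      · have htpos : 0 < min 1 (d / (2 * e)) := by
          apply lt_min one_pos; positivity
        have := key _ htpos (min_le_left _ _)
        have hmul : min 1 (d / (2 * e)) * e ≤ (d / (2 * e)) * e :=
          mul_le_mul_of_nonneg_right (min_le_right _ _) hpos.le
        have : d < (d / (2 * e)) * e := lt_of_lt_of_le this hmul
        rw [div_mul_eq_mul_div, mul_comm] at this
        have h2 : e * d / (2 * e) = d / 2 := by
          field_simp
        nlinarith [this]
  · -- empty interior: hull lies in a line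
    have hne : (s : Set ℂ).Nonempty := by
      rcases s.eq_empty_or_nonempty with h | h
      · subst h; simp at hμ
      · exact ⟨h.choose, h.choose_spec⟩
    obtain ⟨p, hp⟩ := hne
    have hspan : affineSpan ℝ (s : Set ℂ) ≠ ⊤ := by
      intro h
      apply hint
      rw [(convex_convexHull ℝ (s : Set ℂ)).interior_nonempty_iff_affineSpan_eq_top,
        affineSpan_convexHull]
      exact h
    have hdir : (affineSpan ℝ (s : Set ℂ)).direction ≠ ⊤ := by
      intro h
      exact hspan ((AffineSubspace.direction_eq_top_iff_of_nonempty
        ⟨p, subset_affineSpan ℝ _ hp⟩).mp h)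
    obtain ⟨f, hf0, hfbot⟩ := Submodule.exists_dual_map_eq_bot_of_lt_top
      (lt_top_iff_ne_top.mpr hdir) inferInstance
    have hker : ∀ v ∈ (affineSpan ℝ (s : Set ℂ)).direction, f v = 0 := by
      intro v hv
      have : f v ∈ Submodule.map f (affineSpan ℝ (s : Set ℂ)).direction :=
        ⟨v, hv, rfl⟩
      rw [hfbot] at this
      simpa using this
    have hconst : ∀ z ∈ s, f z = f p := by
      intro z hz
      have hsub : z - p ∈ (affineSpan ℝ (s : Set ℂ)).direction := by
        have := AffineSubspace.vsub_mem_direction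
          (subset_affineSpan ℝ (s : Set ℂ) hz) (subset_affineSpan ℝ (s : Set ℂ) hp)
        simpa using this
      have := hker _ hsub
      rw [map_sub] at this
      linarith
    have hμp : f μ = f p := by
      have : convexHull ℝ (s : Set ℂ) ⊆ {w | f w = f p} :=
        convexHull_min (fun z hz => hconst z hz) (convex_hyperplane f.isLinear _)
      exact this hμ
    refine ⟨f 1, f Complex.I, ?_, ?_⟩
    · rintro ⟨h1, hI⟩
      apply hf0
      apply LinearMap.ext
      intro z
      rw [lm_eq f z, h1, hI]
      simp [lfun]
    · intro z hz
      rw [← lm_eq, ← lm_eq, hconst z hz, hμp]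

/-- Planar boundary lemma: a non-interior point of the hull of a finite set of complex
numbers lies on a segment between two of them. -/
lemma planar_segment {s : Finset ℂ} {μ : ℂ}
    (hμ : μ ∈ convexHull ℝ (s : Set ℂ))
    (hni : μ ∉ interior (convexHull ℝ (s : Set ℂ))) :
    ∃ x ∈ s, ∃ y ∈ s, μ ∈ segment ℝ x y := by
  obtain ⟨a, b, hab, hle⟩ := exists_support hμ hni
  have hμ' := mem_convexHull_filter a b hle hμ
  obtain ⟨x, hx, y, hy, hseg⟩ := segment_of_line hab
    (fun z hz => (Finset.mem_filter.mp hz).2) hμ'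
  exact ⟨x, (Finset.mem_filter.mp hx).1, y, (Finset.mem_filter.mp hy).1, hseg⟩

end Planar

noncomputable def traceMap {n : ℕ} (C U : Matrix (Fin n) (Fin n) ℂ) :
    Matrix (Fin n) (Fin n) ℂ →ₗ[ℝ] ℂ where
  toFun B := (C * Uᴴ * B * U).trace
  map_add' B₁ B₂ := by
    simp [Matrix.mul_add, Matrix.add_mul]
  map_smul' r B := by
    simp [Matrix.mul_smul, Matrix.smul_mul]

theorem stmt_17 {n : ℕ} (C : Matrix (Fin n) (Fin n) ℂ)
    (G : Set (Matrix (Fin n) (Fin n) ℂ)) (μ : ℂ)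
    (hμ : μ ∈ cNumRangeSet C (convexHull ℝ G))
    (hb : μ ∈ frontier (cNumRangeSet C (convexHull ℝ G))) :
    ∃ B₁ ∈ G, ∃ B₂ ∈ G, ∃ V ∈ Matrix.unitaryGroup (Fin n) ℂ,
      μ ∈ segment ℝ ((C * Vᴴ * B₁ * V).trace) ((C * Vᴴ * B₂ * V).trace) := by
  simp only [cNumRangeSet, Set.mem_iUnion, cNumRange, Set.mem_setOf_eq] at hμ
  obtain ⟨A, hA, U, hU, hμA⟩ := hμ
  have himg : μ ∈ convexHull ℝ (traceMap C U '' G) := by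
    rw [← (traceMap C U).image_convexHull]
    exact ⟨A, hA, hμA.symm⟩
  rw [convexHull_eq_union_convexHull_finite_subsets] at himg
  simp only [Set.mem_iUnion] at himg
  obtain ⟨s, hsub, hμs⟩ := himg
  have hP : convexHull ℝ (s : Set ℂ) ⊆ cNumRangeSet C (convexHull ℝ G) := by
    intro x hx
    have : x ∈ convexHull ℝ (traceMap C U '' G) := convexHull_mono hsub hx
    rw [← (traceMap C U).image_convexHull] at this
    obtain ⟨B, hB, hxB⟩ := this
    simp only [cNumRangeSet, Set.mem_iUnion, cNumRange, Set.mem_setOf_eq]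
    exact ⟨B, hB, U, hU, hxB.symm⟩
  have hni : μ ∉ interior (convexHull ℝ (s : Set ℂ)) := by
    intro h
    exact hb.2 (interior_mono hP h)
  obtain ⟨x, hx, y, hy, hseg⟩ := planar_segment hμs hni
  obtain ⟨B₁, hB₁, hxB⟩ := hsub hx
  obtain ⟨B₂, hB₂, hyB⟩ := hsub hy
  refine ⟨B₁, hB₁, B₂, hB₂, U, hU, ?_⟩
  have h1 : (C * Uᴴ * B₁ * U).trace = x := hxB
  have h2 : (C * Uᴴ * B₂ * U).trace = y := hyB
  rw [h1, h2]
  exact hseg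
end
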